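/- Let μ be an N-extremal solution of the moment problem and let λ ∈ ℂ \ supp(μ). Then for every x ∈ supp(μ) one has D(λ,x) ≠ 0 and ∫ 1/(s−λ) dμ(s) = −C(λ,x)/D(λ,x); in particular the ratio C(λ,x)/D(λ,x) does not depend on x ∈ supp(μ). -/

import Mathlib

open Filter Topology MeasureTheory

noncomputable section

/-- Action of the Jacobi matrix `J` on a complex sequence:
`(Jc)ₙ = aₙ₋₁cₙ₋₁ + bₙcₙ + aₙcₙ₊₁` with `a₋₁ := 0`. -/
def jacobiMul (a b : ℕ → ℝ) (c : ℕ → ℂ) : ℕ → ℂ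
  | 0 => (b 0 : ℂ) * c 0 + (a 0 : ℂ) * c 1
  | n + 1 => (a n : ℂ) * c n + (b (n + 1) : ℂ) * c (n + 1) + (a (n + 1) : ℂ) * c (n + 2)

/-- `jacobiGraph a b f g` means: `f` belongs to the domain `D(T)` of the closure `T` of the
Jacobi matrix acting on the finitely supported sequences, and `T f = g`; i.e. there are
finitely supported sequences `u k → f` in `ℓ²` such that `J (u k) → g` in `ℓ²`. -/
def jacobiGraph (a b : ℕ → ℝ) (f g : ℕ → ℂ) : Prop :=
  ∃ u : ℕ → ℕ → ℂ,
    (∀ k, (Function.support (u k)).Finite) ∧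
    (∀ k, Summable fun n => ‖u k n - f n‖ ^ 2) ∧
    Tendsto (fun k => ∑' n, ‖u k n - f n‖ ^ 2) atTop (𝓝 0) ∧
    (∀ k, Summable fun n => ‖jacobiMul a b (u k) n - g n‖ ^ 2) ∧
    Tendsto (fun k => ∑' n, ‖jacobiMul a b (u k) n - g n‖ ^ 2) atTop (𝓝 0)

/-- Membership in the domain `D(T)` of the Jacobi operator. -/
def inDomT (a b : ℕ → ℝ) (f : ℕ → ℂ) : Prop := ∃ g, jacobiGraph a b f g

/-- The `ℓ²` norm of a complex sequence. -/
def l2norm (f : ℕ → ℂ) : ℝ := Real.sqrt (∑' n, ‖f n‖ ^ 2)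

/-- The data of an indeterminate Hamburger moment problem: Jacobi parameters `a`, `b`,
the orthonormal polynomials `p` and second-kind polynomials `q` (as entire functions),
determined by the three-term recurrence, together with the indeterminacy condition
`∑ₙ (|pₙ(z)|² + |qₙ(z)|²) < ∞` for all `z`. -/
structure JacobiSetup where
  a : ℕ → ℝ
  b : ℕ → ℝ
  ha : ∀ n, 0 < a n
  p : ℕ → ℂ → ℂ
  q : ℕ → ℂ → ℂ
  hp0 : ∀ z, p 0 z = 1
  hp1 : ∀ z, p 1 z = (z - (b 0 : ℂ)) / (a 0 : ℂ)
  hq0 : ∀ z, q 0 z = 0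
  hq1 : ∀ z, q 1 z = 1 / (a 0 : ℂ)
  hrecp : ∀ n z, z * p (n + 1) z =
    (a (n + 1) : ℂ) * p (n + 2) z + (b (n + 1) : ℂ) * p (n + 1) z + (a n : ℂ) * p n z
  hrecq : ∀ n z, z * q (n + 1) z =
    (a (n + 1) : ℂ) * q (n + 2) z + (b (n + 1) : ℂ) * q (n + 1) z + (a n : ℂ) * q n z
  indet : ∀ z : ℂ, Summable fun n => ‖p n z‖ ^ 2 + ‖q n z‖ ^ 2

/-- The Nevanlinna function `A(u,v)`. -/
def nevA (S : JacobiSetup) (u v : ℂ) : ℂ := (u - v) * ∑' k, S.q k u * S.q k v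
/-- The Nevanlinna function `B(u,v)`. -/
def nevB (S : JacobiSetup) (u v : ℂ) : ℂ := -1 + (u - v) * ∑' k, S.p k u * S.q k v
/-- The Nevanlinna function `C(u,v)`. -/
def nevC (S : JacobiSetup) (u v : ℂ) : ℂ := 1 + (u - v) * ∑' k, S.q k u * S.p k v
/-- The Nevanlinna function `D(u,v)`. -/
def nevD (S : JacobiSetup) (u v : ℂ) : ℂ := (u - v) * ∑' k, S.p k u * S.p k v

/-- The support of a measure on `ℝ`: points all of whose neighbourhoods have
positive measure. -/
def measSupport (μ : Measure ℝ) : Set ℝ := {x | ∀ U ∈ 𝓝 x, μ U ≠ 0}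

/-- `μ` is a solution of the moment problem associated with `S`: a probability measure on `ℝ`
with moments of all orders for which the `pₙ` are orthonormal. -/
def IsSolution (S : JacobiSetup) (μ : Measure ℝ) : Prop :=
  IsProbabilityMeasure μ ∧
  (∀ n : ℕ, Integrable (fun x : ℝ => x ^ n) μ) ∧
  (∀ n m : ℕ, Integrable (fun x : ℝ => S.p n (x : ℂ) * S.p m (x : ℂ)) μ) ∧
  (∀ n m : ℕ, ∫ x : ℝ, S.p n (x : ℂ) * S.p m (x : ℂ) ∂μ = if n = m then 1 else 0)

/-- `μ` is an N-extremal solution: a solution for which the polynomials are dense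
in `L²(μ)`. -/
def IsNExtremal (S : JacobiSetup) (μ : Measure ℝ) : Prop :=
  IsSolution S μ ∧
  ∀ f : ℝ → ℂ, MemLp f 2 μ → ∀ ε : ℝ, 0 < ε →
    ∃ P : Polynomial ℂ, ∫ x : ℝ, ‖f x - Polynomial.eval (x : ℂ) P‖ ^ 2 ∂μ < ε

section Alg

open ComplexConjugate Finset

variable (S : JacobiSetup)

lemma JS.aC_ne (n : ℕ) : (S.a n : ℂ) ≠ 0 := by
  exact_mod_cast Complex.ofReal_ne_zero.mpr (ne_of_gt (S.ha n))

lemma JS.p_rec0 (z : ℂ) : z * S.p 0 z = (S.a 0 : ℂ) * S.p 1 z + (S.b 0 : ℂ) * S.p 0 z := by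
  have h0 := JS.aC_ne S 0
  rw [S.hp0, S.hp1]
  field_simp
  ring

lemma JS.q_rec0 (z : ℂ) : (S.a 0 : ℂ) * S.q 1 z + (S.b 0 : ℂ) * S.q 0 z = 1 := by
  have h0 := JS.aC_ne S 0
  rw [S.hq0, S.hq1]
  field_simp
  ring

lemma JS.p_step (n : ℕ) (z : ℂ) :
    S.p (n + 2) z = (z * S.p (n+1) z - (S.b (n+1) : ℂ) * S.p (n+1) z - (S.a n : ℂ) * S.p n z)
      / (S.a (n+1) : ℂ) := by
  rw [eq_div_iff (JS.aC_ne S (n+1))]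
  linear_combination (-1 : ℂ) * S.hrecp n z

lemma JS.q_step (n : ℕ) (z : ℂ) :
    S.q (n + 2) z = (z * S.q (n+1) z - (S.b (n+1) : ℂ) * S.q (n+1) z - (S.a n : ℂ) * S.q n z)
      / (S.a (n+1) : ℂ) := by
  rw [eq_div_iff (JS.aC_ne S (n+1))]
  linear_combination (-1 : ℂ) * S.hrecq n z

lemma JS.conj_pq : ∀ (k : ℕ) (z : ℂ),
    S.p k (conj z) = conj (S.p k z) ∧ S.q k (conj z) = conj (S.q k z) := by
  have H : ∀ k : ℕ, (∀ z, S.p k (conj z) = conj (S.p k z) ∧ S.q k (conj z) = conj (S.q k z)) ∧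
      (∀ z, S.p (k+1) (conj z) = conj (S.p (k+1) z) ∧ S.q (k+1) (conj z) = conj (S.q (k+1) z)) := by
    intro k
    induction k with
    | zero =>
      refine ⟨fun z => ⟨by rw [S.hp0, S.hp0, map_one], by rw [S.hq0, S.hq0, map_zero]⟩,
        fun z => ⟨?_, ?_⟩⟩
      · rw [S.hp1, S.hp1, map_div₀, map_sub, Complex.conj_ofReal, Complex.conj_ofReal]
      · rw [S.hq1, S.hq1, map_div₀, map_one, Complex.conj_ofReal]
    | succ n ih =>
      refine ⟨ih.2, fun z => ⟨?_, ?_⟩⟩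
      · rw [JS.p_step S n (conj z), JS.p_step S n z, (ih.1 z).1, (ih.2 z).1,
          map_div₀, map_sub, map_sub, map_mul, map_mul, map_mul,
          Complex.conj_ofReal, Complex.conj_ofReal, Complex.conj_ofReal]
      · rw [JS.q_step S n (conj z), JS.q_step S n z, (ih.1 z).2, (ih.2 z).2,
          map_div₀, map_sub, map_sub, map_mul, map_mul, map_mul,
          Complex.conj_ofReal, Complex.conj_ofReal, Complex.conj_ofReal]
  exact fun k => (H k).1

lemma JS.p_real (k : ℕ) (s : ℝ) : conj (S.p k (s : ℂ)) = S.p k (s : ℂ) := by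
  rw [← (JS.conj_pq S k (s : ℂ)).1, Complex.conj_ofReal]

/-- Wronskian of p and q is constant `-1`. -/
lemma JS.wronskian (n : ℕ) (z : ℂ) :
    (S.a n : ℂ) * (S.p (n+1) z * S.q n z - S.p n z * S.q (n+1) z) = -1 := by
  induction n with
  | zero =>
    have h0 := JS.aC_ne S 0
    rw [S.hp0, S.hp1, S.hq0, S.hq1]
    field_simp
    ring
  | succ n ih =>
    linear_combination (-(S.q (n+1) z)) * S.hrecp n z + (S.p (n+1) z) * S.hrecq n z + ih

/-- Christoffel–Darboux for p,p. -/
lemma JS.cd_pp (u v : ℂ) : ∀ N : ℕ,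
    (u - v) * ∑ k ∈ range (N+1), S.p k u * S.p k v
      = (S.a N : ℂ) * (S.p (N+1) u * S.p N v - S.p N u * S.p (N+1) v) := by
  intro N
  induction N with
  | zero =>
    have h0 := JS.aC_ne S 0
    simp only [zero_add, sum_range_one, S.hp0, S.hp1]
    field_simp
    ring
  | succ n ih =>
    have h1 := JS.aC_ne S (n+1)
    rw [sum_range_succ, mul_add, ih, JS.p_step S n u, JS.p_step S n v]
    field_simp
    ring

lemma JS.cd_qq (u v : ℂ) : ∀ N : ℕ,
    (u - v) * ∑ k ∈ range (N+1), S.q k u * S.q k v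
      = (S.a N : ℂ) * (S.q (N+1) u * S.q N v - S.q N u * S.q (N+1) v) := by
  intro N
  induction N with
  | zero =>
    simp only [zero_add, sum_range_one, S.hq0]
    ring
  | succ n ih =>
    have h1 := JS.aC_ne S (n+1)
    rw [sum_range_succ, mul_add, ih, JS.q_step S n u, JS.q_step S n v]
    field_simp
    ring

lemma JS.cd_qp (u v : ℂ) : ∀ N : ℕ,
    (u - v) * ∑ k ∈ range (N+1), S.q k u * S.p k v
      = (S.a N : ℂ) * (S.q (N+1) u * S.p N v - S.q N u * S.p (N+1) v) - 1 := by
  intro N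
  induction N with
  | zero =>
    have h0 := JS.aC_ne S 0
    simp only [zero_add, sum_range_one, S.hq0, S.hq1, S.hp0]
    field_simp
    ring
  | succ n ih =>
    have h1 := JS.aC_ne S (n+1)
    rw [sum_range_succ, mul_add, ih, JS.q_step S n u, JS.p_step S n v]
    field_simp
    ring

lemma JS.cd_pq (u v : ℂ) : ∀ N : ℕ,
    (u - v) * ∑ k ∈ range (N+1), S.p k u * S.q k v
      = (S.a N : ℂ) * (S.p (N+1) u * S.q N v - S.p N u * S.q (N+1) v) + 1 := by
  intro N
  induction N with
  | zero =>
    have h0 := JS.aC_ne S 0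
    simp only [zero_add, sum_range_one, S.hq0, S.hq1, S.hp0]
    field_simp
    ring
  | succ n ih =>
    have h1 := JS.aC_ne S (n+1)
    rw [sum_range_succ, mul_add, ih, JS.p_step S n u, JS.q_step S n v]
    field_simp
    ring

end Alg
section Alg2

open ComplexConjugate Finset Filter

variable (S : JacobiSetup)

lemma JS.summable_p_sq (z : ℂ) : Summable fun k => ‖S.p k z‖^2 := by
  refine Summable.of_nonneg_of_le (fun k => by positivity) (fun k => ?_) (S.indet z)
  have : (0:ℝ) ≤ ‖S.q k z‖^2 := by positivity
  linarith

lemma JS.summable_q_sq (z : ℂ) : Summable fun k => ‖S.q k z‖^2 := by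
  refine Summable.of_nonneg_of_le (fun k => by positivity) (fun k => ?_) (S.indet z)
  have : (0:ℝ) ≤ ‖S.p k z‖^2 := by positivity
  linarith

lemma JS.summable_mul {f g : ℕ → ℂ} (hf : Summable fun k => ‖f k‖^2)
    (hg : Summable fun k => ‖g k‖^2) : Summable fun k => f k * g k := by
  refine Summable.of_norm (Summable.of_nonneg_of_le (fun k => norm_nonneg _)
    (fun k => ?_) ((hf.add hg).mul_left (1/2 : ℝ)))
  simp only [norm_mul]
  nlinarith [norm_nonneg (f k), norm_nonneg (g k), sq_nonneg (‖f k‖ - ‖g k‖)]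

lemma JS.summable_pp (u v : ℂ) : Summable fun k => S.p k u * S.p k v :=
  JS.summable_mul (JS.summable_p_sq S u) (JS.summable_p_sq S v)
lemma JS.summable_qq (u v : ℂ) : Summable fun k => S.q k u * S.q k v :=
  JS.summable_mul (JS.summable_q_sq S u) (JS.summable_q_sq S v)
lemma JS.summable_pq (u v : ℂ) : Summable fun k => S.p k u * S.q k v :=
  JS.summable_mul (JS.summable_p_sq S u) (JS.summable_q_sq S v)
lemma JS.summable_qp (u v : ℂ) : Summable fun k => S.q k u * S.p k v :=
  JS.summable_mul (JS.summable_q_sq S u) (JS.summable_p_sq S v)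

lemma JS.tendsto_partial {f : ℕ → ℂ} (hf : Summable f) :
    Tendsto (fun N => ∑ k ∈ range (N+1), f k) atTop (𝓝 (∑' k, f k)) :=
  (hf.hasSum.tendsto_sum_nat).comp (tendsto_add_atTop_nat 1)

/-- The determinant identity for the Nevanlinna functions. -/
lemma JS.nev_det (u v : ℂ) :
    nevA S u v * nevD S u v - nevB S u v * nevC S u v = 1 := by
  have hA : Tendsto (fun N => (u - v) * ∑ k ∈ range (N+1), S.q k u * S.q k v)
      atTop (𝓝 (nevA S u v)) := (JS.tendsto_partial (JS.summable_qq S u v)).const_mul _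
  have hD : Tendsto (fun N => (u - v) * ∑ k ∈ range (N+1), S.p k u * S.p k v)
      atTop (𝓝 (nevD S u v)) := (JS.tendsto_partial (JS.summable_pp S u v)).const_mul _
  have hB : Tendsto (fun N => -1 + (u - v) * ∑ k ∈ range (N+1), S.p k u * S.q k v)
      atTop (𝓝 (nevB S u v)) :=
    ((JS.tendsto_partial (JS.summable_pq S u v)).const_mul _).const_add _
  have hC : Tendsto (fun N => 1 + (u - v) * ∑ k ∈ range (N+1), S.q k u * S.p k v)
      atTop (𝓝 (nevC S u v)) :=
    ((JS.tendsto_partial (JS.summable_qp S u v)).const_mul _).const_add _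
  have key : ∀ N : ℕ,
      ((u - v) * ∑ k ∈ range (N+1), S.q k u * S.q k v) *
        ((u - v) * ∑ k ∈ range (N+1), S.p k u * S.p k v) -
      (-1 + (u - v) * ∑ k ∈ range (N+1), S.p k u * S.q k v) *
        (1 + (u - v) * ∑ k ∈ range (N+1), S.q k u * S.p k v) = 1 := by
    intro N
    rw [JS.cd_pp S u v N, JS.cd_qq S u v N, JS.cd_qp S u v N, JS.cd_pq S u v N]
    linear_combination ((S.a N : ℂ) * (S.p (N+1) v * S.q N v - S.p N v * S.q (N+1) v)) *
      JS.wronskian S N u - JS.wronskian S N v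
  have := tendsto_nhds_unique ((hA.mul hD).sub (hB.mul hC))
    (by simpa only [key] using tendsto_const_nhds :
      Tendsto (fun N : ℕ => _) atTop (𝓝 (1:ℂ)))
  exact this

end Alg2
section Alg3

open Finset Polynomial

/-- Pairs of consecutive orthonormal polynomials. -/
def JS.PPaux (S : JacobiSetup) : ℕ → Polynomial ℂ × Polynomial ℂ
  | 0 => (1, Polynomial.C ((S.a 0 : ℂ))⁻¹ * (Polynomial.X - Polynomial.C (S.b 0 : ℂ)))
  | n+1 =>
    ((JS.PPaux S n).2, Polynomial.C ((S.a (n+1) : ℂ))⁻¹ *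
      ((Polynomial.X - Polynomial.C (S.b (n+1) : ℂ)) * (JS.PPaux S n).2
        - Polynomial.C (S.a n : ℂ) * (JS.PPaux S n).1))

/-- The orthonormal polynomials as `Polynomial ℂ`. -/
def JS.PP (S : JacobiSetup) : ℕ → Polynomial ℂ
  | 0 => 1
  | n+1 => (JS.PPaux S n).2

lemma JS.PPaux_fst (S : JacobiSetup) (n : ℕ) : (JS.PPaux S n).1 = JS.PP S n := by
  cases n with
  | zero => rfl
  | succ n => rfl

lemma JS.eval_PP (S : JacobiSetup) : ∀ (n : ℕ) (z : ℂ), (JS.PP S n).eval z = S.p n z := by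
  have H : ∀ n z, ((JS.PPaux S n).1.eval z = S.p n z) ∧ ((JS.PPaux S n).2.eval z = S.p (n+1) z) := by
    intro n
    induction n with
    | zero =>
      intro z
      constructor
      · simp [JS.PPaux, S.hp0]
      · simp [JS.PPaux, S.hp1]
        rw [div_eq_inv_mul]
    | succ n ih =>
      intro z
      refine ⟨(ih z).2, ?_⟩
      show (Polynomial.C ((S.a (n+1) : ℂ))⁻¹ *
        ((Polynomial.X - Polynomial.C (S.b (n+1) : ℂ)) * (JS.PPaux S n).2
          - Polynomial.C (S.a n : ℂ) * (JS.PPaux S n).1)).eval z = S.p (n+2) z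
      rw [JS.p_step S n z]
      simp only [Polynomial.eval_mul, Polynomial.eval_C, Polynomial.eval_sub,
        Polynomial.eval_X, (ih z).1, (ih z).2]
      rw [div_eq_inv_mul]
      ring
  intro n z
  cases n with
  | zero => simp [JS.PP, S.hp0]
  | succ n => exact (H n z).2

lemma JS.PP_deg (S : JacobiSetup) : ∀ n : ℕ,
    (JS.PP S n).natDegree ≤ n ∧ (JS.PP S n).coeff n ≠ 0 := by
  have H : ∀ n : ℕ, ((JS.PPaux S n).1.natDegree ≤ n ∧ (JS.PPaux S n).1.coeff n ≠ 0) ∧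
      ((JS.PPaux S n).2.natDegree ≤ n+1 ∧ (JS.PPaux S n).2.coeff (n+1) ≠ 0) := by
    intro n
    induction n with
    | zero =>
      constructor
      · constructor
        · simp [JS.PPaux]
        · simp [JS.PPaux]
      · constructor
        · refine le_trans (natDegree_mul_le) ?_
          simp only [natDegree_C, zero_add]
          exact natDegree_X_sub_C_le _
        · have : ((Polynomial.C ((S.a 0 : ℂ))⁻¹ * (Polynomial.X - Polynomial.C (S.b 0 : ℂ)))).coeff 1
              = ((S.a 0 : ℂ))⁻¹ := by
            simp [coeff_C_mul, coeff_X, coeff_C]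
          show (JS.PPaux S 0).2.coeff 1 ≠ 0
          rw [show (JS.PPaux S 0).2 = Polynomial.C ((S.a 0 : ℂ))⁻¹ *
            (Polynomial.X - Polynomial.C (S.b 0 : ℂ)) from rfl, this]
          exact inv_ne_zero (JS.aC_ne S 0)
    | succ n ih =>
      have e2 : (JS.PPaux S (n+1)).2 = Polynomial.C ((S.a (n+1) : ℂ))⁻¹ *
          ((Polynomial.X - Polynomial.C (S.b (n+1) : ℂ)) * (JS.PPaux S n).2
            - Polynomial.C (S.a n : ℂ) * (JS.PPaux S n).1) := rfl
      refine ⟨ih.2, ?_, ?_⟩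
      · rw [e2]
        refine le_trans natDegree_mul_le ?_
        simp only [natDegree_C, zero_add]
        refine le_trans (natDegree_sub_le _ _) ?_
        refine max_le (le_trans natDegree_mul_le ?_) (le_trans natDegree_mul_le ?_)
        · have h1 : (Polynomial.X - Polynomial.C ((S.b (n+1) : ℂ))).natDegree ≤ 1 :=
            natDegree_X_sub_C_le _
          have h2 := ih.2.1
          have h3 := ih.1.1
          omega
        · simp only [natDegree_C, zero_add]
          have h2 := ih.2.1
          have h3 := ih.1.1
          omega
      · rw [show n+1+1 = n+2 from rfl, e2]
        have z1 : (JS.PPaux S n).1.coeff (n+2) = 0 :=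
          coeff_eq_zero_of_natDegree_lt (by have := ih.1.1; omega)
        have z2 : (JS.PPaux S n).2.coeff (n+2) = 0 :=
          coeff_eq_zero_of_natDegree_lt (by have := ih.2.1; omega)
        rw [coeff_C_mul, sub_mul, coeff_sub, coeff_sub, coeff_X_mul, coeff_C_mul, coeff_C_mul,
          z1, z2]
        simp only [mul_zero, sub_zero]
        exact mul_ne_zero (inv_ne_zero (JS.aC_ne S (n+1))) ih.2.2
  intro n
  cases n with
  | zero => constructor <;> simp [JS.PP]
  | succ n => exact (H n).2

/-- Every polynomial is a finite linear combination of the `pₖ`. -/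
lemma JS.poly_span (S : JacobiSetup) (P : Polynomial ℂ) :
    ∃ (n : ℕ) (c : ℕ → ℂ), ∀ z : ℂ, P.eval z = ∑ k ∈ range (n+1), c k * S.p k z := by
  have main : ∀ d : ℕ, ∀ P : Polynomial ℂ, P.natDegree ≤ d →
      ∃ c : ℕ → ℂ, ∀ z : ℂ, P.eval z = ∑ k ∈ range (d+1), c k * S.p k z := by
    intro d
    induction d with
    | zero =>
      intro P hP
      refine ⟨fun _ => P.coeff 0, fun z => ?_⟩
      rw [Polynomial.eq_C_of_natDegree_le_zero hP]
      simp only [zero_add, sum_range_one, S.hp0, mul_one, Polynomial.eval_C,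
        Polynomial.coeff_C_zero]
    | succ d ih =>
      intro P hP
      set γ := P.coeff (d+1) / (JS.PP S (d+1)).coeff (d+1) with hγ
      set Q := P - Polynomial.C γ * JS.PP S (d+1) with hQ
      have hQdeg : Q.natDegree ≤ d := by
        refine natDegree_le_iff_coeff_eq_zero.2 (fun m hm => ?_)
        rw [hQ, coeff_sub, coeff_C_mul]
        rcases eq_or_lt_of_le (Nat.succ_le_of_lt hm) with h | h
        · rw [← h, hγ, div_mul_cancel₀ _ ((JS.PP_deg S (d+1)).2)]
          ring
        · rw [coeff_eq_zero_of_natDegree_lt (lt_of_le_of_lt hP h),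
            coeff_eq_zero_of_natDegree_lt (lt_of_le_of_lt (JS.PP_deg S (d+1)).1 h)]
          ring
      obtain ⟨c, hc⟩ := ih Q hQdeg
      refine ⟨fun k => if k = d+1 then γ else c k, fun z => ?_⟩
      have hPz : P.eval z = Q.eval z + γ * S.p (d+1) z := by
        rw [hQ]
        simp [JS.eval_PP S (d+1) z]
      have hrhs : ∀ m : ℕ, (fun k => if k = d+1 then γ else c k) m
          = if m = d+1 then γ else c m := fun m => rfl
      rw [hPz, hc z]
      conv_rhs => rw [sum_range_succ]
      simp only [hrhs, if_true]
      congr 1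
      refine Finset.sum_congr rfl (fun k hk => ?_)
      rw [if_neg (by have := mem_range.1 hk; omega)]
  exact ⟨P.natDegree + 1, (main (P.natDegree + 1) P (by omega)).choose,
    (main (P.natDegree + 1) P (by omega)).choose_spec⟩

lemma JS.p_cont (S : JacobiSetup) (k : ℕ) : Continuous fun s : ℝ => S.p k (s : ℂ) := by
  have : (fun s : ℝ => S.p k (s : ℂ)) = fun s : ℝ => (JS.PP S k).eval ((s : ℝ) : ℂ) := by
    funext s; rw [JS.eval_PP]
  rw [this]
  exact (Polynomial.continuous _).comp Complex.continuous_ofReal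

end Alg3
section Meas1

open ComplexConjugate Finset Filter MeasureTheory

lemma measSupport_isClosed (μ : Measure ℝ) : IsClosed (measSupport μ) := by
  rw [← isOpen_compl_iff, isOpen_iff_mem_nhds]
  intro x hx
  simp only [measSupport, Set.mem_compl_iff, Set.mem_setOf_eq, not_forall] at hx
  obtain ⟨U, hU, hU0⟩ := hx
  refine Filter.mem_of_superset (interior_mem_nhds.2 hU) ?_
  intro y hy hy'
  exact hy' U (mem_interior_iff_mem_nhds.1 hy) (not_not.1 hU0)

lemma measSupport_compl_null (μ : Measure ℝ) : μ (measSupport μ)ᶜ = 0 := by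
  refine measure_null_of_locally_null _ (fun x hx => ?_)
  simp only [measSupport, Set.mem_compl_iff, Set.mem_setOf_eq, not_forall] at hx
  obtain ⟨U, hU, hU0⟩ := hx
  exact ⟨U, mem_nhdsWithin_of_mem_nhds hU, not_not.1 hU0⟩

lemma ae_mem_measSupport (μ : Measure ℝ) : ∀ᵐ s ∂μ, s ∈ measSupport μ := by
  have := measSupport_compl_null μ
  rw [ae_iff]
  simpa [Set.compl_def] using this

lemma exists_dist_bound (μ : Measure ℝ) (lam : ℂ)
    (hlam : ∀ x ∈ measSupport μ, (x : ℂ) ≠ lam) :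
    ∃ d : ℝ, 0 < d ∧ ∀ x ∈ measSupport μ, d ≤ ‖(x:ℂ) - lam‖ := by
  by_cases him : lam.im = 0
  · rcases Set.eq_empty_or_nonempty (measSupport μ) with he | hne
    · exact ⟨1, one_pos, fun x hx => by rw [he] at hx; exact absurd hx (Set.notMem_empty x)⟩
    · have hre : lam.re ∉ measSupport μ := by
        intro h
        exact hlam lam.re h (Complex.ext (by simp) (by simp [him]))
      have hd : 0 < Metric.infDist lam.re (measSupport μ) :=
        ((measSupport_isClosed μ).notMem_iff_infDist_pos hne).1 hre
      refine ⟨Metric.infDist lam.re (measSupport μ), hd, fun x hx => ?_⟩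
      have h1 : Metric.infDist lam.re (measSupport μ) ≤ dist lam.re x :=
        Metric.infDist_le_dist_of_mem hx
      have h2 : ((x:ℂ) - lam) = ((x - lam.re : ℝ) : ℂ) := by
        apply Complex.ext <;> simp [him]
      rw [h2, Complex.norm_real, Real.norm_eq_abs]
      rw [Real.dist_eq, abs_sub_comm] at h1
      exact h1
  · refine ⟨|lam.im|, abs_pos.2 him, fun x hx => ?_⟩
    have h1 : |((x:ℂ) - lam).im| ≤ ‖(x:ℂ) - lam‖ := Complex.abs_im_le_norm _
    simpa using h1

variable {S : JacobiSetup} {μ : Measure ℝ}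

/-- Fourier coefficient of `g` with respect to the orthonormal polynomials. -/
def JSM.ck (S : JacobiSetup) (μ : Measure ℝ) (g : ℝ → ℂ) (k : ℕ) : ℂ :=
  ∫ s, g s * S.p k (s:ℂ) ∂μ

lemma JSM.p_aesm (S : JacobiSetup) (k : ℕ) :
    AEStronglyMeasurable (fun s : ℝ => S.p k (s:ℂ)) μ :=
  (JS.p_cont S k).aestronglyMeasurable

lemma csq (z : ℂ) : ‖z‖^2 = Complex.normSq z := by
  rw [← Complex.sq_norm]

lemma norm_sub_sq' (a b : ℂ) : ‖a - b‖^2 = ‖a‖^2 - 2*((a * conj b).re) + ‖b‖^2 := by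
  simp only [csq, Complex.normSq_apply, Complex.sub_re, Complex.sub_im, Complex.mul_re,
    Complex.mul_im, Complex.conj_re, Complex.conj_im]
  ring

lemma JSM.p_sq_int (hsol : IsSolution S μ) (k : ℕ) :
    Integrable (fun s : ℝ => ‖S.p k (s:ℂ)‖^2) μ := by
  have h := (hsol.2.2.1 k k).re
  have e : ∀ s : ℝ, RCLike.re (S.p k (s:ℂ) * S.p k (s:ℂ)) = ‖S.p k (s:ℂ)‖^2 := by
    intro s
    rw [show S.p k (s:ℂ) * S.p k (s:ℂ) = S.p k (s:ℂ) * conj (S.p k (s:ℂ)) by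
        rw [JS.p_real S k s],
      Complex.mul_conj]
    rw [csq]
    simp
  exact h.congr (Filter.Eventually.of_forall (fun s => e s))

lemma JSM.p_mem2 (hsol : IsSolution S μ) (k : ℕ) :
    MemLp (fun s : ℝ => S.p k (s:ℂ)) 2 μ :=
  (memLp_two_iff_integrable_sq_norm (JSM.p_aesm S k)).2 (JSM.p_sq_int hsol k)

lemma JSM.sq_int {g : ℝ → ℂ} (hg : MemLp g 2 μ) : Integrable (fun s => ‖g s‖^2) μ :=
  (memLp_two_iff_integrable_sq_norm hg.aestronglyMeasurable).1 hg

lemma JSM.mul_int {u v : ℝ → ℂ} (hu : MemLp u 2 μ) (hv : MemLp v 2 μ) :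
    Integrable (fun s => u s * v s) μ := by
  have hu2 := JSM.sq_int hu
  have hv2 := JSM.sq_int hv
  refine Integrable.mono' ((hu2.add hv2).div_const 2)
    (hu.aestronglyMeasurable.mul hv.aestronglyMeasurable)
    (Filter.Eventually.of_forall (fun s => ?_))
  rw [norm_mul]
  simp only [Pi.add_apply]
  nlinarith [norm_nonneg (u s), norm_nonneg (v s), sq_nonneg (‖u s‖ - ‖v s‖)]

lemma JSM.conj_mem2 {u : ℝ → ℂ} (hu : MemLp u 2 μ) : MemLp (fun s => conj (u s)) 2 μ := by
  refine (memLp_two_iff_integrable_sq_norm (RCLike.continuous_conj.comp_aestronglyMeasurable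
    hu.aestronglyMeasurable)).2 ?_
  refine (JSM.sq_int hu).congr (Filter.Eventually.of_forall (fun s => ?_))
  simp

lemma JSM.gp_int {g : ℝ → ℂ} (hsol : IsSolution S μ) (hg : MemLp g 2 μ) (k : ℕ) :
    Integrable (fun s => g s * S.p k (s:ℂ)) μ :=
  JSM.mul_int hg (JSM.p_mem2 hsol k)

/-- Cauchy–Schwarz for integrals. -/
lemma JSM.cs {u v : ℝ → ℂ} (hu : MemLp u 2 μ) (hv : MemLp v 2 μ) :
    ‖∫ s, u s * v s ∂μ‖ ≤ Real.sqrt (∫ s, ‖u s‖^2 ∂μ) * Real.sqrt (∫ s, ‖v s‖^2 ∂μ) := by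
  have h1 : ‖∫ s, u s * v s ∂μ‖ ≤ ∫ s, ‖u s‖ * ‖v s‖ ∂μ := by
    refine le_trans (norm_integral_le_integral_norm _) (le_of_eq (integral_congr_ae
      (Filter.Eventually.of_forall (fun s => norm_mul _ _))))
  have hpq : Real.HolderConjugate 2 2 := Real.HolderConjugate.two_two
  have h2 := MeasureTheory.integral_mul_norm_le_Lp_mul_Lq (μ := μ) hpq
    (by simpa using hu) (by simpa using hv)
  have e0 : ∀ (w : ℝ → ℂ) (s : ℝ), ‖w s‖ ^ (2:ℝ) = ‖w s‖^2 := by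
    intro w s
    rw [← Real.rpow_natCast ‖w s‖ 2]
    norm_num
  have e1 : ∀ w : ℝ → ℂ, (∫ a, ‖w a‖ ^ (2:ℝ) ∂μ) = ∫ a, ‖w a‖^2 ∂μ := fun w =>
    integral_congr_ae (Filter.Eventually.of_forall (fun s => e0 w s))
  rw [Real.sqrt_eq_rpow, Real.sqrt_eq_rpow, ← e1 u, ← e1 v]
  exact le_trans h1 h2

end Meas1
section Meas2

open ComplexConjugate Finset Filter MeasureTheory

variable {S : JacobiSetup} {μ : Measure ℝ}

lemma JSM.conj_sum (S : JacobiSetup) (d : ℕ → ℂ) (N : ℕ) (s : ℝ) :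
    conj (∑ k ∈ range (N+1), d k * S.p k (s:ℂ))
      = ∑ k ∈ range (N+1), conj (d k) * S.p k (s:ℂ) := by
  rw [map_sum]
  exact sum_congr rfl fun k _ => by rw [map_mul, JS.p_real]

lemma JSM.T_mem2 (hsol : IsSolution S μ) (d : ℕ → ℂ) (N : ℕ) :
    MemLp (fun s : ℝ => ∑ k ∈ range (N+1), d k * S.p k (s:ℂ)) 2 μ := by
  have h := memLp_finset_sum' (range (N+1))
    (fun k (_ : k ∈ range (N+1)) => (JSM.p_mem2 hsol k).const_mul (d k))
  have e : (∑ k ∈ range (N+1), fun x : ℝ => d k * S.p k (x:ℂ))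
      = fun s : ℝ => ∑ k ∈ range (N+1), d k * S.p k (s:ℂ) := by
    funext s
    simp
  rwa [e] at h

/-- Generalized Pythagoras identity for approximation by partial sums. -/
lemma JSM.pyth (hsol : IsSolution S μ) {g : ℝ → ℂ} (hg : MemLp g 2 μ) (N : ℕ) (d : ℕ → ℂ) :
    ∫ s, ‖g s - ∑ k ∈ range (N+1), d k * S.p k (s:ℂ)‖^2 ∂μ
      = ∫ s, ‖g s‖^2 ∂μ - ∑ k ∈ range (N+1), ‖JSM.ck S μ g k‖^2
        + ∑ k ∈ range (N+1), ‖JSM.ck S μ g k - d k‖^2 := by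
  set T : ℝ → ℂ := fun s => ∑ k ∈ range (N+1), d k * S.p k (s:ℂ) with hT
  have hgp : ∀ k, Integrable (fun s => g s * S.p k (s:ℂ)) μ := fun k => JSM.gp_int hsol hg k
  -- pointwise representation of g * conj T
  have hGT : ∀ s : ℝ, g s * conj (T s)
      = ∑ k ∈ range (N+1), conj (d k) * (g s * S.p k (s:ℂ)) := by
    intro s
    rw [hT, JSM.conj_sum, Finset.mul_sum]
    exact sum_congr rfl fun k _ => by ring
  have hGT_int : Integrable (fun s => g s * conj (T s)) μ := by
    have : Integrable (fun s => ∑ k ∈ range (N+1), conj (d k) * (g s * S.p k (s:ℂ))) μ :=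
      integrable_finset_sum _ (fun k _ => (hgp k).const_mul _)
    exact this.congr (Filter.Eventually.of_forall (fun s => (hGT s).symm))
  have hIGT : ∫ s, g s * conj (T s) ∂μ
      = ∑ k ∈ range (N+1), conj (d k) * JSM.ck S μ g k := by
    rw [integral_congr_ae (Filter.Eventually.of_forall hGT),
      integral_finset_sum _ (fun k _ => (hgp k).const_mul _)]
    exact sum_congr rfl fun k _ => integral_const_mul _ _
  -- pointwise representation of T * conj T
  have hTT : ∀ s : ℝ, T s * conj (T s)
      = ∑ j ∈ range (N+1), ∑ k ∈ range (N+1),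
          (d j * conj (d k)) * (S.p j (s:ℂ) * S.p k (s:ℂ)) := by
    intro s
    rw [hT, JSM.conj_sum, Finset.sum_mul_sum]
    exact sum_congr rfl fun j _ => sum_congr rfl fun k _ => by ring
  have hjint : ∀ j, Integrable (fun s : ℝ => ∑ k ∈ range (N+1),
      (d j * conj (d k)) * (S.p j (s:ℂ) * S.p k (s:ℂ))) μ :=
    fun j => integrable_finset_sum _ (fun k _ => (hsol.2.2.1 j k).const_mul _)
  have hTT_int : Integrable (fun s => T s * conj (T s)) μ := by
    have h0 : Integrable (fun s : ℝ => ∑ j ∈ range (N+1), ∑ k ∈ range (N+1),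
        (d j * conj (d k)) * (S.p j (s:ℂ) * S.p k (s:ℂ))) μ :=
      integrable_finset_sum _ (fun j _ => hjint j)
    exact h0.congr (Filter.Eventually.of_forall (fun s => (hTT s).symm))
  have hITT : ∫ s, T s * conj (T s) ∂μ = ∑ k ∈ range (N+1), d k * conj (d k) := by
    rw [integral_congr_ae (Filter.Eventually.of_forall hTT),
      integral_finset_sum _ (fun j _ => hjint j)]
    refine sum_congr rfl fun j hj => ?_
    rw [integral_finset_sum _ (fun k _ => (hsol.2.2.1 j k).const_mul _)]
    rw [show (∑ k ∈ range (N+1), ∫ s, (d j * conj (d k)) * (S.p j (s:ℂ) * S.p k (s:ℂ)) ∂μ)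
        = ∑ k ∈ range (N+1), (d j * conj (d k)) * (if j = k then 1 else 0) from
      sum_congr rfl fun k _ => by rw [integral_const_mul, hsol.2.2.2 j k]]
    rw [Finset.sum_eq_single j]
    · simp
    · intro k _ hkj
      rw [if_neg (fun h => hkj h.symm), mul_zero]
    · intro hj'
      exact absurd hj hj'
  -- pointwise norms
  have hpt : ∀ s : ℝ, ‖g s - T s‖^2 = ‖g s‖^2 - 2*((g s * conj (T s)).re) + ‖T s‖^2 :=
    fun s => norm_sub_sq' _ _
  have hT2 : ∀ s : ℝ, ‖T s‖^2 = (T s * conj (T s)).re := by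
    intro s
    rw [Complex.mul_conj, csq]
    simp
  have hGT_re_int : Integrable (fun s => (g s * conj (T s)).re) μ := hGT_int.re
  have hT2_int : Integrable (fun s => ‖T s‖^2) μ := by
    refine hTT_int.re.congr (Filter.Eventually.of_forall (fun s => (hT2 s).symm))
  have hg2 : Integrable (fun s => ‖g s‖^2) μ := JSM.sq_int hg
  have i1 : Integrable (fun s : ℝ => ‖g s‖^2 - 2*((g s * conj (T s)).re)) μ := by
    have := hg2.sub (hGT_re_int.const_mul 2)
    exact this
  have split : ∫ s, ‖g s - T s‖^2 ∂μ
      = ∫ s, ‖g s‖^2 ∂μ - 2 * ∫ s, (g s * conj (T s)).re ∂μ + ∫ s, ‖T s‖^2 ∂μ := by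
    rw [integral_congr_ae (Filter.Eventually.of_forall hpt)]
    rw [integral_add i1 hT2_int, integral_sub hg2 (hGT_re_int.const_mul 2),
      integral_const_mul]
  have e1 : ∫ s, (g s * conj (T s)).re ∂μ
      = (∑ k ∈ range (N+1), conj (d k) * JSM.ck S μ g k).re := by
    rw [← hIGT]
    exact integral_re hGT_int
  have e2 : ∫ s, ‖T s‖^2 ∂μ = ∑ k ∈ range (N+1), ‖d k‖^2 := by
    rw [integral_congr_ae (Filter.Eventually.of_forall hT2),
      show (∫ s, (T s * conj (T s)).re ∂μ) = (∫ s, T s * conj (T s) ∂μ).re from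
        integral_re hTT_int,
      hITT, Complex.re_sum]
    refine sum_congr rfl fun k _ => ?_
    rw [Complex.mul_conj, csq]
    simp
  rw [split, e1, e2, Complex.re_sum]
  have e3 : ∀ k, (conj (d k) * JSM.ck S μ g k).re
      = ((JSM.ck S μ g k) * conj (d k)).re := fun k => by rw [mul_comm]
  simp only [e3]
  have e4 : ∀ k ∈ range (N+1), ‖JSM.ck S μ g k - d k‖^2
      = ‖JSM.ck S μ g k‖^2 - 2*((JSM.ck S μ g k * conj (d k)).re) + ‖d k‖^2 :=
    fun k _ => norm_sub_sq' _ _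
  rw [Finset.sum_congr rfl e4]
  rw [Finset.sum_add_distrib, Finset.sum_sub_distrib, ← Finset.mul_sum]
  ring

/-- Convergence of the orthonormal expansion, from density of polynomials. -/
lemma JSM.EN_tendsto (hμ : IsNExtremal S μ) {g : ℝ → ℂ} (hg : MemLp g 2 μ) :
    Tendsto (fun N => ∫ s, ‖g s - ∑ k ∈ range (N+1), JSM.ck S μ g k * S.p k (s:ℂ)‖^2 ∂μ)
      atTop (𝓝 0) := by
  have hsol := hμ.1
  set c := JSM.ck S μ g with hc
  have hE0 : ∀ N, 0 ≤ ∫ s, ‖g s - ∑ k ∈ range (N+1), c k * S.p k (s:ℂ)‖^2 ∂μ :=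
    fun N => integral_nonneg (fun s => by positivity)
  rw [Metric.tendsto_atTop]
  intro ε hε
  obtain ⟨P, hP⟩ := hμ.2 g hg ε hε
  obtain ⟨n₀, cc, hcc⟩ := JS.poly_span S P
  refine ⟨n₀, fun N hN => ?_⟩
  rw [Real.dist_eq, sub_zero, abs_of_nonneg (hE0 N)]
  -- pad the coefficients
  set d : ℕ → ℂ := fun k => if k ∈ range (n₀+1) then cc k else 0 with hd
  have hTd : ∀ s : ℝ, (∑ k ∈ range (N+1), d k * S.p k (s:ℂ)) = Polynomial.eval (s:ℂ) P := by
    intro s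
    rw [hcc (s:ℂ)]
    rw [← Finset.sum_subset (Finset.range_subset_range.2 (by omega) :
      range (n₀+1) ⊆ range (N+1))]
    · exact sum_congr rfl fun k hk => by rw [hd]; simp only [if_pos hk]
    · intro k _ hk
      rw [hd]
      simp only [if_neg hk, zero_mul]
  have h1 := JSM.pyth hsol hg N d
  have h2 := JSM.pyth hsol hg N c
  have h2' : ∫ s, ‖g s - ∑ k ∈ range (N+1), c k * S.p k (s:ℂ)‖^2 ∂μ
      = ∫ s, ‖g s‖^2 ∂μ - ∑ k ∈ range (N+1), ‖c k‖^2 := by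
    rw [h2]
    simp [hc]
  have hTd2 : ∀ s : ℝ, ‖g s - ∑ k ∈ range (N+1), d k * S.p k (s:ℂ)‖^2
      = ‖g s - Polynomial.eval (s:ℂ) P‖^2 := fun s => by rw [hTd s]
  have h3 : ∫ s, ‖g s - ∑ k ∈ range (N+1), d k * S.p k (s:ℂ)‖^2 ∂μ
      = ∫ s, ‖g s - Polynomial.eval (s:ℂ) P‖^2 ∂μ :=
    integral_congr_ae (Filter.Eventually.of_forall hTd2)
  have h4 : (0:ℝ) ≤ ∑ k ∈ range (N+1), ‖c k - d k‖^2 :=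
    Finset.sum_nonneg (fun k _ => by positivity)
  calc ∫ s, ‖g s - ∑ k ∈ range (N+1), c k * S.p k (s:ℂ)‖^2 ∂μ
      = ∫ s, ‖g s‖^2 ∂μ - ∑ k ∈ range (N+1), ‖c k‖^2 := h2'
    _ ≤ ∫ s, ‖g s - ∑ k ∈ range (N+1), d k * S.p k (s:ℂ)‖^2 ∂μ := by rw [h1]; linarith
    _ = ∫ s, ‖g s - Polynomial.eval (s:ℂ) P‖^2 ∂μ := h3
    _ < ε := hP

/-- Parseval identity. -/
lemma JSM.parseval (hμ : IsNExtremal S μ) {g : ℝ → ℂ} (hg : MemLp g 2 μ) :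
    HasSum (fun k => ‖JSM.ck S μ g k‖^2) (∫ s, ‖g s‖^2 ∂μ) := by
  have hsol := hμ.1
  set c := JSM.ck S μ g with hc
  set A := ∫ s, ‖g s‖^2 ∂μ with hA
  have key : ∀ N, ∑ k ∈ range (N+1), ‖c k‖^2
      = A - ∫ s, ‖g s - ∑ k ∈ range (N+1), c k * S.p k (s:ℂ)‖^2 ∂μ := by
    intro N
    have hp := JSM.pyth hsol hg N c
    have hz : ∑ k ∈ range (N+1), ‖JSM.ck S μ g k - c k‖^2 = 0 := by
      refine Finset.sum_eq_zero fun k _ => ?_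
      rw [hc, sub_self, norm_zero]
      ring
    rw [hz, add_zero] at hp
    rw [hc] at *
    linarith [hp]
  have htend : Tendsto (fun N => ∑ k ∈ range (N+1), ‖c k‖^2) atTop (𝓝 A) := by
    have := (JSM.EN_tendsto hμ hg)
    have h2 : Tendsto (fun N => A - ∫ s, ‖g s - ∑ k ∈ range (N+1), c k * S.p k (s:ℂ)‖^2 ∂μ)
        atTop (𝓝 (A - 0)) := tendsto_const_nhds.sub this
    rw [sub_zero] at h2
    exact h2.congr (fun N => (key N).symm)
  have hsumm : Summable (fun k => ‖c k‖^2) := by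
    refine summable_of_sum_range_le (c := A) (fun k => by positivity) (fun n => ?_)
    cases n with
    | zero =>
      simp only [range_zero, sum_empty, hA]
      exact integral_nonneg (fun s => by positivity)
    | succ m =>
      rw [key m]
      have := integral_nonneg (μ := μ)
        (f := fun s => ‖g s - ∑ k ∈ range (m+1), c k * S.p k (s:ℂ)‖^2) (fun s => by positivity)
      linarith
  have := hsumm.hasSum
  have h5 : Tendsto (fun N => ∑ k ∈ range (N+1), ‖c k‖^2) atTop (𝓝 (∑' k, ‖c k‖^2)) :=
    (hsumm.hasSum.tendsto_sum_nat).comp (tendsto_add_atTop_nat 1)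
  have : (∑' k, ‖c k‖^2) = A := tendsto_nhds_unique h5 htend
  rw [← this]
  exact hsumm.hasSum

end Meas2
section Meas3

open ComplexConjugate Finset Filter MeasureTheory

/-- The resolvent kernel function. -/
def JSM.F (lam : ℂ) : ℝ → ℂ := fun s => ((s:ℂ) - lam)⁻¹

/-- The Green matrix. -/
def JSM.G (S : JacobiSetup) (μ : Measure ℝ) (lam : ℂ) (k j : ℕ) : ℂ :=
  ∫ s, S.p k (s:ℂ) * S.p j (s:ℂ) * JSM.F lam s ∂μ

variable {S : JacobiSetup} {μ : Measure ℝ} {lam : ℂ} {d : ℝ}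

lemma JSM.F_aesm : AEStronglyMeasurable (JSM.F lam) μ :=
  ((Complex.measurable_ofReal.sub measurable_const).inv).aestronglyMeasurable

lemma JSM.F_bound (hd0 : 0 < d) (hdae : ∀ᵐ (s : ℝ) ∂μ, d ≤ ‖(s:ℂ) - lam‖) :
    ∀ᵐ (s : ℝ) ∂μ, ‖JSM.F lam s‖ ≤ d⁻¹ := by
  refine hdae.mono fun s hs => ?_
  rw [show JSM.F lam s = ((s:ℂ) - lam)⁻¹ from rfl, norm_inv]
  exact inv_anti₀ hd0 hs

lemma JSM.F_mem2 [IsFiniteMeasure μ] (hd0 : 0 < d)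
    (hdae : ∀ᵐ (s : ℝ) ∂μ, d ≤ ‖(s:ℂ) - lam‖) : MemLp (JSM.F lam) 2 μ :=
  MemLp.of_bound JSM.F_aesm d⁻¹ (JSM.F_bound hd0 hdae)

lemma JSM.F_int [IsFiniteMeasure μ] (hd0 : 0 < d)
    (hdae : ∀ᵐ (s : ℝ) ∂μ, d ≤ ‖(s:ℂ) - lam‖) : Integrable (JSM.F lam) μ :=
  Integrable.mono' (integrable_const d⁻¹) JSM.F_aesm (JSM.F_bound hd0 hdae)

lemma JSM.F_cancel (hd0 : 0 < d) (hdae : ∀ᵐ (s : ℝ) ∂μ, d ≤ ‖(s:ℂ) - lam‖) :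
    ∀ᵐ (s : ℝ) ∂μ, ((s:ℂ) - lam) * JSM.F lam s = 1 := by
  refine hdae.mono fun s hs => ?_
  have hne : ((s:ℂ) - lam) ≠ 0 := by
    intro h
    rw [h] at hs
    simp only [norm_zero] at hs
    linarith
  exact mul_inv_cancel₀ hne

lemma JSM.pF_mem2 (hsol : IsSolution S μ) (hd0 : 0 < d)
    (hdae : ∀ᵐ (s : ℝ) ∂μ, d ≤ ‖(s:ℂ) - lam‖) (k : ℕ) :
    MemLp (fun s : ℝ => S.p k (s:ℂ) * JSM.F lam s) 2 μ := by
  have haesm : AEStronglyMeasurable (fun s : ℝ => S.p k (s:ℂ) * JSM.F lam s) μ :=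
    (JSM.p_aesm S k).mul JSM.F_aesm
  refine (memLp_two_iff_integrable_sq_norm haesm).2 ?_
  have hm0 : AEStronglyMeasurable (fun s : ℝ => ‖S.p k (s:ℂ) * JSM.F lam s‖) μ :=
    ((JSM.p_aesm S k).mul (JSM.F_aesm (μ := μ) (lam := lam))).norm
  have hm : AEStronglyMeasurable (fun s : ℝ => ‖S.p k (s:ℂ) * JSM.F lam s‖^2) μ := by
    refine (hm0.mul hm0).congr (Filter.Eventually.of_forall (fun s => ?_))
    exact (pow_two _).symm
  refine Integrable.mono' ((JSM.p_sq_int hsol k).const_mul (d⁻¹^2)) hm ?_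
  refine (JSM.F_bound hd0 hdae).mono (fun s hs => ?_)
  have h1 : (0:ℝ) ≤ ‖S.p k (s:ℂ) * JSM.F lam s‖^2 := by positivity
  rw [Real.norm_of_nonneg h1, norm_mul]
  have h2 := norm_nonneg (S.p k (s:ℂ))
  have h3 := norm_nonneg (JSM.F lam s)
  have h4 : ‖JSM.F lam s‖^2 ≤ d⁻¹^2 := by nlinarith
  calc (‖S.p k (s:ℂ)‖ * ‖JSM.F lam s‖)^2 = ‖S.p k (s:ℂ)‖^2 * ‖JSM.F lam s‖^2 := by ring
    _ ≤ ‖S.p k (s:ℂ)‖^2 * d⁻¹^2 := by nlinarith [sq_nonneg ‖S.p k (s:ℂ)‖]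
    _ = d⁻¹^2 * ‖S.p k (s:ℂ)‖^2 := by ring

lemma JSM.ppF_int (hsol : IsSolution S μ) (hd0 : 0 < d)
    (hdae : ∀ᵐ (s : ℝ) ∂μ, d ≤ ‖(s:ℂ) - lam‖) (k j : ℕ) :
    Integrable (fun s : ℝ => S.p k (s:ℂ) * S.p j (s:ℂ) * JSM.F lam s) μ := by
  have h := JSM.mul_int (JSM.pF_mem2 hsol hd0 hdae k) (JSM.p_mem2 hsol j)
  refine h.congr (Filter.Eventually.of_forall (fun s => by ring))

lemma JSM.G_symm (k j : ℕ) : JSM.G S μ lam k j = JSM.G S μ lam j k := by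
  have e : ∀ s : ℝ, S.p k (s:ℂ) * S.p j (s:ℂ) * JSM.F lam s
      = S.p j (s:ℂ) * S.p k (s:ℂ) * JSM.F lam s := fun s => by ring
  exact integral_congr_ae (Filter.Eventually.of_forall e)

lemma JSM.cancel_ae (hd0 : 0 < d) (hdae : ∀ᵐ (s : ℝ) ∂μ, d ≤ ‖(s:ℂ) - lam‖)
    (m j : ℕ) :
    (fun s : ℝ => (((s:ℂ) - lam) * JSM.F lam s) * (S.p m (s:ℂ) * S.p j (s:ℂ)))
      =ᵐ[μ] (fun s : ℝ => S.p m (s:ℂ) * S.p j (s:ℂ)) :=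
  (JSM.F_cancel hd0 hdae).mono fun s hs => by
    show (((s:ℂ) - lam) * JSM.F lam s) * (S.p m (s:ℂ) * S.p j (s:ℂ))
      = S.p m (s:ℂ) * S.p j (s:ℂ)
    rw [hs, one_mul]

lemma JSM.G_row0 [IsFiniteMeasure μ] (hsol : IsSolution S μ) (hd0 : 0 < d)
    (hdae : ∀ᵐ (s : ℝ) ∂μ, d ≤ ‖(s:ℂ) - lam‖) (j : ℕ) :
    (S.a 0 : ℂ) * JSM.G S μ lam 1 j + (S.b 0 : ℂ) * JSM.G S μ lam 0 j
      = lam * JSM.G S μ lam 0 j + (if 0 = j then 1 else 0) := by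
  have hint := fun m => JSM.ppF_int hsol hd0 hdae m j
  -- the function s * p0 * pj * F
  have e1 : ∀ s : ℝ, (S.a 0 : ℂ) * (S.p 1 (s:ℂ) * S.p j (s:ℂ) * JSM.F lam s)
        + (S.b 0 : ℂ) * (S.p 0 (s:ℂ) * S.p j (s:ℂ) * JSM.F lam s)
      = lam * (S.p 0 (s:ℂ) * S.p j (s:ℂ) * JSM.F lam s)
        + (((s:ℂ) - lam) * JSM.F lam s) * (S.p 0 (s:ℂ) * S.p j (s:ℂ)) := by
    intro s
    have h := JS.p_rec0 S (s:ℂ)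
    linear_combination (-(S.p j (s:ℂ) * JSM.F lam s)) * h
  have i1 : Integrable (fun s : ℝ => (S.a 0 : ℂ) * (S.p 1 (s:ℂ) * S.p j (s:ℂ) * JSM.F lam s)
      + (S.b 0 : ℂ) * (S.p 0 (s:ℂ) * S.p j (s:ℂ) * JSM.F lam s)) μ :=
    ((hint 1).const_mul _).add ((hint 0).const_mul _)
  have i2 : Integrable (fun s : ℝ => lam * (S.p 0 (s:ℂ) * S.p j (s:ℂ) * JSM.F lam s)) μ :=
    (hint 0).const_mul _
  have i3 : Integrable (fun s : ℝ =>
      (((s:ℂ) - lam) * JSM.F lam s) * (S.p 0 (s:ℂ) * S.p j (s:ℂ))) μ :=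
    (hsol.2.2.1 0 j).congr (JSM.cancel_ae hd0 hdae 0 j).symm
  have e2 : ∫ s, (((s:ℂ) - lam) * JSM.F lam s) * (S.p 0 (s:ℂ) * S.p j (s:ℂ)) ∂μ
      = (if 0 = j then 1 else 0) := by
    rw [integral_congr_ae (JSM.cancel_ae hd0 hdae 0 j), hsol.2.2.2 0 j]
  calc (S.a 0 : ℂ) * JSM.G S μ lam 1 j + (S.b 0 : ℂ) * JSM.G S μ lam 0 j
      = ∫ s, ((S.a 0 : ℂ) * (S.p 1 (s:ℂ) * S.p j (s:ℂ) * JSM.F lam s)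
          + (S.b 0 : ℂ) * (S.p 0 (s:ℂ) * S.p j (s:ℂ) * JSM.F lam s)) ∂μ := by
        rw [integral_add ((hint 1).const_mul _) ((hint 0).const_mul _),
          integral_const_mul, integral_const_mul]
        rfl
    _ = ∫ s, (lam * (S.p 0 (s:ℂ) * S.p j (s:ℂ) * JSM.F lam s)
          + (((s:ℂ) - lam) * JSM.F lam s) * (S.p 0 (s:ℂ) * S.p j (s:ℂ))) ∂μ :=
        integral_congr_ae (Filter.Eventually.of_forall e1)
    _ = lam * JSM.G S μ lam 0 j + (if 0 = j then 1 else 0) := by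
        rw [integral_add i2 i3, integral_const_mul, e2]
        rfl

lemma JSM.G_row [IsFiniteMeasure μ] (hsol : IsSolution S μ) (hd0 : 0 < d)
    (hdae : ∀ᵐ (s : ℝ) ∂μ, d ≤ ‖(s:ℂ) - lam‖) (k j : ℕ) :
    (S.a (k+1) : ℂ) * JSM.G S μ lam (k+2) j + (S.b (k+1) : ℂ) * JSM.G S μ lam (k+1) j
        + (S.a k : ℂ) * JSM.G S μ lam k j
      = lam * JSM.G S μ lam (k+1) j + (if k+1 = j then 1 else 0) := by
  have hint := fun m => JSM.ppF_int hsol hd0 hdae m j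
  have e1 : ∀ s : ℝ, (S.a (k+1) : ℂ) * (S.p (k+2) (s:ℂ) * S.p j (s:ℂ) * JSM.F lam s)
        + (S.b (k+1) : ℂ) * (S.p (k+1) (s:ℂ) * S.p j (s:ℂ) * JSM.F lam s)
        + (S.a k : ℂ) * (S.p k (s:ℂ) * S.p j (s:ℂ) * JSM.F lam s)
      = lam * (S.p (k+1) (s:ℂ) * S.p j (s:ℂ) * JSM.F lam s)
        + (((s:ℂ) - lam) * JSM.F lam s) * (S.p (k+1) (s:ℂ) * S.p j (s:ℂ)) := by
    intro s
    have h := S.hrecp k (s:ℂ)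
    linear_combination (-(S.p j (s:ℂ) * JSM.F lam s)) * h
  have i1a : Integrable (fun s : ℝ =>
      (S.a (k+1) : ℂ) * (S.p (k+2) (s:ℂ) * S.p j (s:ℂ) * JSM.F lam s)
      + (S.b (k+1) : ℂ) * (S.p (k+1) (s:ℂ) * S.p j (s:ℂ) * JSM.F lam s)) μ :=
    ((hint (k+2)).const_mul _).add ((hint (k+1)).const_mul _)
  have i2 : Integrable (fun s : ℝ => lam * (S.p (k+1) (s:ℂ) * S.p j (s:ℂ) * JSM.F lam s)) μ :=
    (hint (k+1)).const_mul _
  have i3 : Integrable (fun s : ℝ =>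
      (((s:ℂ) - lam) * JSM.F lam s) * (S.p (k+1) (s:ℂ) * S.p j (s:ℂ))) μ :=
    (hsol.2.2.1 (k+1) j).congr (JSM.cancel_ae hd0 hdae (k+1) j).symm
  have e2 : ∫ s, (((s:ℂ) - lam) * JSM.F lam s) * (S.p (k+1) (s:ℂ) * S.p j (s:ℂ)) ∂μ
      = (if k+1 = j then 1 else 0) := by
    rw [integral_congr_ae (JSM.cancel_ae hd0 hdae (k+1) j), hsol.2.2.2 (k+1) j]
  calc (S.a (k+1) : ℂ) * JSM.G S μ lam (k+2) j + (S.b (k+1) : ℂ) * JSM.G S μ lam (k+1) j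
        + (S.a k : ℂ) * JSM.G S μ lam k j
      = ∫ s, ((S.a (k+1) : ℂ) * (S.p (k+2) (s:ℂ) * S.p j (s:ℂ) * JSM.F lam s)
          + (S.b (k+1) : ℂ) * (S.p (k+1) (s:ℂ) * S.p j (s:ℂ) * JSM.F lam s)
          + (S.a k : ℂ) * (S.p k (s:ℂ) * S.p j (s:ℂ) * JSM.F lam s)) ∂μ := by
        rw [integral_add i1a ((hint k).const_mul _),
          integral_add ((hint (k+2)).const_mul _) ((hint (k+1)).const_mul _),
          integral_const_mul, integral_const_mul, integral_const_mul]
        rfl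
    _ = ∫ s, (lam * (S.p (k+1) (s:ℂ) * S.p j (s:ℂ) * JSM.F lam s)
          + (((s:ℂ) - lam) * JSM.F lam s) * (S.p (k+1) (s:ℂ) * S.p j (s:ℂ))) ∂μ :=
        integral_congr_ae (Filter.Eventually.of_forall e1)
    _ = lam * JSM.G S μ lam (k+1) j + (if k+1 = j then 1 else 0) := by
        rw [integral_add i2 i3, integral_const_mul, e2]
        rfl

/-- Column formula for the Green matrix below the diagonal. -/
lemma JSM.G_col [IsFiniteMeasure μ] (hsol : IsSolution S μ) (hd0 : 0 < d)
    (hdae : ∀ᵐ (s : ℝ) ∂μ, d ≤ ‖(s:ℂ) - lam‖) (j : ℕ) :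
    ∀ k, k ≤ j → JSM.G S μ lam k j = JSM.G S μ lam 0 j * S.p k lam := by
  have H : ∀ k : ℕ, (k ≤ j → JSM.G S μ lam k j = JSM.G S μ lam 0 j * S.p k lam) ∧
      (k+1 ≤ j → JSM.G S μ lam (k+1) j = JSM.G S μ lam 0 j * S.p (k+1) lam) := by
    intro k
    induction k with
    | zero =>
      constructor
      · intro _
        rw [S.hp0, mul_one]
      · intro h1
        have hrow := JSM.G_row0 hsol hd0 hdae j
        rw [if_neg (by omega)] at hrow
        have ha := JS.aC_ne S 0
        rw [S.hp1]
        field_simp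
        linear_combination hrow
    | succ k ih =>
      refine ⟨ih.2, ?_⟩
      intro h2
      have hrow := JSM.G_row hsol hd0 hdae k j
      rw [if_neg (by omega)] at hrow
      have ha := JS.aC_ne S (k+1)
      have e1 := ih.1 (by omega)
      have e2 := ih.2 (by omega)
      rw [e1, e2] at hrow
      rw [JS.p_step S k lam]
      field_simp
      linear_combination hrow
  exact fun k hk => (H k).1 hk

/-- The first column of the Green matrix is the Weyl solution `q + w p`. -/
lemma JSM.psi_eq [IsProbabilityMeasure μ] (hsol : IsSolution S μ) (hd0 : 0 < d)
    (hdae : ∀ᵐ (s : ℝ) ∂μ, d ≤ ‖(s:ℂ) - lam‖) :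
    ∀ j, JSM.G S μ lam 0 j = S.q j lam + (∫ s, JSM.F lam s ∂μ) * S.p j lam := by
  set w := ∫ s, JSM.F lam s ∂μ with hw
  have base0 : JSM.G S μ lam 0 0 = w := by
    have e : ∀ s : ℝ, S.p 0 (s:ℂ) * S.p 0 (s:ℂ) * JSM.F lam s = JSM.F lam s := by
      intro s
      rw [S.hp0]
      ring
    exact integral_congr_ae (Filter.Eventually.of_forall e)
  have base1 : JSM.G S μ lam 0 1 = S.q 1 lam + w * S.p 1 lam := by
    have ha := JS.aC_ne S 0
    have e1 : ∀ s : ℝ, S.p 0 (s:ℂ) * S.p 1 (s:ℂ) * JSM.F lam s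
        = (S.a 0 : ℂ)⁻¹ * (((s:ℂ) - lam) * JSM.F lam s)
          + ((lam - (S.b 0 : ℂ)) / (S.a 0 : ℂ)) * JSM.F lam s := by
      intro s
      rw [S.hp0, S.hp1]
      field_simp
      ring
    have hae1 : ∀ᵐ (s : ℝ) ∂μ, ((S.a 0 : ℂ)⁻¹ : ℂ)
        = (S.a 0 : ℂ)⁻¹ * (((s:ℂ) - lam) * JSM.F lam s) :=
      (JSM.F_cancel hd0 hdae).mono (fun s hs => by rw [hs, mul_one])
    have i1 : Integrable (fun s : ℝ => (S.a 0 : ℂ)⁻¹ * (((s:ℂ) - lam) * JSM.F lam s)) μ :=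
      (integrable_const ((S.a 0 : ℂ)⁻¹)).congr hae1
    have i2 : Integrable (fun s : ℝ =>
        ((lam - (S.b 0 : ℂ)) / (S.a 0 : ℂ)) * JSM.F lam s) μ :=
      (JSM.F_int hd0 hdae).const_mul _
    have e3 : ∫ s, (((s:ℂ) - lam) * JSM.F lam s) ∂μ = 1 := by
      rw [integral_congr_ae (JSM.F_cancel hd0 hdae), integral_const]
      simp
    show (∫ s, S.p 0 (s:ℂ) * S.p 1 (s:ℂ) * JSM.F lam s ∂μ) = _
    rw [integral_congr_ae (Filter.Eventually.of_forall e1), integral_add i1 i2,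
      integral_const_mul, integral_const_mul]
    rw [e3, S.hq1, S.hp1, ← hw]
    field_simp
  have H : ∀ j : ℕ, (JSM.G S μ lam 0 j = S.q j lam + w * S.p j lam) ∧
      (JSM.G S μ lam 0 (j+1) = S.q (j+1) lam + w * S.p (j+1) lam) := by
    intro j
    induction j with
    | zero => exact ⟨by rw [base0, S.hq0, S.hp0]; ring, base1⟩
    | succ j ih =>
      refine ⟨ih.2, ?_⟩
      have hrow := JSM.G_row hsol hd0 hdae j 0
      rw [if_neg (by omega)] at hrow
      have ha := JS.aC_ne S (j+1)
      rw [JSM.G_symm (j+2) 0, JSM.G_symm (j+1) 0, JSM.G_symm j 0] at hrow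
      rw [ih.1, ih.2] at hrow
      rw [JS.p_step S j lam, JS.q_step S j lam]
      field_simp
      linear_combination hrow
  exact fun j => (H j).1

end Meas3
section Meas4

open ComplexConjugate Finset Filter MeasureTheory

variable {S : JacobiSetup} {μ : Measure ℝ} {lam : ℂ} {d : ℝ}

lemma JSM.ck_pF (k j : ℕ) :
    JSM.ck S μ (fun s => S.p k (s:ℂ) * JSM.F lam s) j = JSM.G S μ lam k j := by
  have e : ∀ s : ℝ, (S.p k (s:ℂ) * JSM.F lam s) * S.p j (s:ℂ)
      = S.p k (s:ℂ) * S.p j (s:ℂ) * JSM.F lam s := fun s => by ring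
  exact integral_congr_ae (Filter.Eventually.of_forall e)

lemma JSM.ck_F (j : ℕ) : JSM.ck S μ (JSM.F lam) j = JSM.G S μ lam 0 j := by
  have e : ∀ s : ℝ, (JSM.F lam s) * S.p j (s:ℂ)
      = S.p 0 (s:ℂ) * S.p j (s:ℂ) * JSM.F lam s := fun s => by rw [S.hp0]; ring
  exact integral_congr_ae (Filter.Eventually.of_forall e)

lemma JSM.G_norm_bound [IsFiniteMeasure μ] (hsol : IsSolution S μ) (hd0 : 0 < d)
    (hdae : ∀ᵐ (s : ℝ) ∂μ, d ≤ ‖(s:ℂ) - lam‖) (k j : ℕ) :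
    ‖JSM.G S μ lam k j‖
      ≤ ‖JSM.G S μ lam 0 j‖ * ‖S.p k lam‖ + ‖JSM.G S μ lam 0 k‖ * ‖S.p j lam‖ := by
  rcases le_total k j with h | h
  · rw [JSM.G_col hsol hd0 hdae j k h, norm_mul]
    have : (0:ℝ) ≤ ‖JSM.G S μ lam 0 k‖ * ‖S.p j lam‖ := by positivity
    linarith
  · rw [JSM.G_symm, JSM.G_col hsol hd0 hdae k j h, norm_mul]
    have : (0:ℝ) ≤ ‖JSM.G S μ lam 0 j‖ * ‖S.p k lam‖ := by positivity
    linarith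

/-- Hilbert–Schmidt property: summability of the row `ℓ²`-norms of the Green matrix. -/
lemma JSM.rho_summable [IsProbabilityMeasure μ] (hμ : IsNExtremal S μ) (hd0 : 0 < d)
    (hdae : ∀ᵐ (s : ℝ) ∂μ, d ≤ ‖(s:ℂ) - lam‖) :
    Summable (fun k => ∫ s, ‖S.p k (s:ℂ) * JSM.F lam s‖^2 ∂μ) := by
  have hsol := hμ.1
  have hψs : Summable (fun m => ‖JSM.G S μ lam 0 m‖^2) := by
    have h := (JSM.parseval hμ (JSM.F_mem2 hd0 hdae)).summable
    refine h.congr (fun m => ?_)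
    rw [JSM.ck_F]
  have hpl : Summable (fun m => ‖S.p m lam‖^2) := JS.summable_p_sq S lam
  set Cψ := ∑' m, ‖JSM.G S μ lam 0 m‖^2 with hCψ
  set Cp := ∑' m, ‖S.p m lam‖^2 with hCp
  have hrow : ∀ k, (∫ s, ‖S.p k (s:ℂ) * JSM.F lam s‖^2 ∂μ)
      ≤ 2 * (Cψ * ‖S.p k lam‖^2) + 2 * (‖JSM.G S μ lam 0 k‖^2 * Cp) := by
    intro k
    have hps := JSM.parseval hμ (JSM.pF_mem2 hsol hd0 hdae k)
    simp only [JSM.ck_pF] at hps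
    have hb : ∀ j, ‖JSM.G S μ lam k j‖^2
        ≤ 2*(‖JSM.G S μ lam 0 j‖^2 * ‖S.p k lam‖^2)
          + 2*(‖JSM.G S μ lam 0 k‖^2 * ‖S.p j lam‖^2) := by
      intro j
      have h1 := JSM.G_norm_bound hsol hd0 hdae k j
      nlinarith [norm_nonneg (JSM.G S μ lam k j), norm_nonneg (JSM.G S μ lam 0 j),
        norm_nonneg (S.p k lam), norm_nonneg (JSM.G S μ lam 0 k), norm_nonneg (S.p j lam),
        sq_nonneg (‖JSM.G S μ lam 0 j‖ * ‖S.p k lam‖ - ‖JSM.G S μ lam 0 k‖ * ‖S.p j lam‖)]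
    have hbs1 : Summable (fun j => 2*(‖JSM.G S μ lam 0 j‖^2 * ‖S.p k lam‖^2)) :=
      (hψs.mul_right _).mul_left 2
    have hbs2 : Summable (fun j => 2*(‖JSM.G S μ lam 0 k‖^2 * ‖S.p j lam‖^2)) :=
      (hpl.mul_left _).mul_left 2
    rw [← hps.tsum_eq]
    calc ∑' j, ‖JSM.G S μ lam k j‖^2
        ≤ ∑' j, (2*(‖JSM.G S μ lam 0 j‖^2 * ‖S.p k lam‖^2)
            + 2*(‖JSM.G S μ lam 0 k‖^2 * ‖S.p j lam‖^2)) :=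
          Summable.tsum_le_tsum hb hps.summable (hbs1.add hbs2)
      _ = 2 * (Cψ * ‖S.p k lam‖^2) + 2 * (‖JSM.G S μ lam 0 k‖^2 * Cp) := by
          rw [Summable.tsum_add hbs1 hbs2, tsum_mul_left, tsum_mul_left, tsum_mul_right, tsum_mul_left]
  have hβ : Summable (fun k => 2 * (Cψ * ‖S.p k lam‖^2)
      + 2 * (‖JSM.G S μ lam 0 k‖^2 * Cp)) :=
    (((hpl.mul_left Cψ).mul_left 2).add ((hψs.mul_right Cp).mul_left 2))
  exact Summable.of_nonneg_of_le
    (fun k => integral_nonneg (fun s => by positivity)) hrow hβ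

/-- Every point of the support of an N-extremal solution is an atom. -/
lemma JSM.atom [IsProbabilityMeasure μ] (hμ : IsNExtremal S μ) (hd0 : 0 < d)
    (hdae : ∀ᵐ (s : ℝ) ∂μ, d ≤ ‖(s:ℂ) - lam‖) {x : ℝ}
    (hx : x ∈ measSupport μ) : μ {x} ≠ 0 := by
  intro h0
  classical
  have hsol := hμ.1
  set ρ : ℕ → ℝ := fun k => ∫ s, ‖S.p k (s:ℂ) * JSM.F lam s‖^2 ∂μ with hρ
  have hρs : Summable ρ := JSM.rho_summable hμ hd0 hdae
  set ε : ℕ → ℝ := fun n => 1/((n:ℝ)+1) with hε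
  have hε0 : ∀ n, 0 < ε n := fun n => by positivity
  have hε1 : ∀ n, ε n ≤ 1 := by
    intro n
    rw [hε]
    rw [div_le_one (by positivity)]
    simp
  set B : ℕ → Set ℝ := fun n => Metric.ball x (ε n) with hB
  have hBmeas : ∀ n, MeasurableSet (B n) := fun n => Metric.isOpen_ball.measurableSet
  have hxB : ∀ n, x ∈ B n := fun n => Metric.mem_ball_self (hε0 n)
  have hBn0 : ∀ n, μ (B n) ≠ 0 := fun n => hx (B n) (Metric.isOpen_ball.mem_nhds (hxB n))
  set m : ℕ → ℝ := fun n => (μ (B n)).toReal with hm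
  have hmpos : ∀ n, 0 < m n := fun n => ENNReal.toReal_pos (hBn0 n) (measure_ne_top μ _)
  set h : ℕ → ℝ → ℂ := fun n => (B n).indicator (JSM.F lam) with hh
  have hmem : ∀ n, MemLp (h n) 2 μ := by
    intro n
    refine MemLp.of_bound (JSM.F_aesm.indicator (hBmeas n)) d⁻¹ ?_
    refine (JSM.F_bound hd0 hdae).mono (fun s hs => ?_)
    exact le_trans (norm_indicator_le_norm_self _ _) hs
  set u : ℕ → ℝ → ℂ := fun n => (B n).indicator (fun _ => (1:ℂ)) with hu
  have humem : ∀ n, MemLp (u n) 2 μ := by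
    intro n
    refine MemLp.of_bound ((aestronglyMeasurable_const).indicator (hBmeas n)) 1 ?_
    refine Filter.Eventually.of_forall (fun s => ?_)
    exact le_trans (norm_indicator_le_norm_self _ _) (by simp)
  have hu2 : ∀ n, ∫ s, ‖u n s‖^2 ∂μ = m n := by
    intro n
    have e : ∀ s : ℝ, ‖u n s‖^2 = (B n).indicator (fun _ => (1:ℝ)) s := by
      intro s
      by_cases hs : s ∈ B n
      · simp [hu, Set.indicator_of_mem hs]
      · simp [hu, Set.indicator_of_notMem hs]
    rw [integral_congr_ae (Filter.Eventually.of_forall e), integral_indicator_const _ (hBmeas n)]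
    simp [hm, Measure.real]
  set v : ℕ → ℕ → ℝ → ℂ :=
    fun n k => (B n).indicator (fun s : ℝ => S.p k (s:ℂ) * JSM.F lam s) with hv
  have hckuv : ∀ n k, JSM.ck S μ (h n) k = ∫ s, u n s * v n k s ∂μ := by
    intro n k
    refine integral_congr_ae (Filter.Eventually.of_forall (fun s => ?_))
    by_cases hs : s ∈ B n
    · show h n s * S.p k (s:ℂ) = u n s * v n k s
      rw [hh, hu, hv]
      simp only [Set.indicator_of_mem hs]
      ring
    · show h n s * S.p k (s:ℂ) = u n s * v n k s
      rw [hh, hu, hv]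
      simp only [Set.indicator_of_notMem hs]
      ring
  have hvmem : ∀ n k, MemLp (v n k) 2 μ :=
    fun n k => (JSM.pF_mem2 hsol hd0 hdae k).indicator (hBmeas n)
  set I : ℕ → ℕ → ℝ :=
    fun n k => ∫ s, (B n).indicator (fun s : ℝ => ‖S.p k (s:ℂ) * JSM.F lam s‖^2) s ∂μ with hI
  have hv2 : ∀ n k, ∫ s, ‖v n k s‖^2 ∂μ = I n k := by
    intro n k
    refine integral_congr_ae (Filter.Eventually.of_forall (fun s => ?_))
    by_cases hs : s ∈ B n
    · show ‖v n k s‖^2 = _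
      rw [hv]
      simp only [Set.indicator_of_mem hs]
    · show ‖v n k s‖^2 = _
      rw [hv]
      simp only [Set.indicator_of_notMem hs]
      simp
  have hI0 : ∀ n k, 0 ≤ I n k := by
    intro n k
    refine integral_nonneg (fun s => ?_)
    show (0:ℝ) ≤ (B n).indicator (fun s : ℝ => ‖S.p k (s:ℂ) * JSM.F lam s‖^2) s
    rw [Set.indicator_apply]
    split_ifs with hh'
    · positivity
    · exact le_rfl
  have hvint : ∀ k, Integrable (fun s : ℝ => ‖S.p k (s:ℂ) * JSM.F lam s‖^2) μ :=
    fun k => JSM.sq_int (JSM.pF_mem2 hsol hd0 hdae k)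
  have hIle : ∀ n k, I n k ≤ ρ k := by
    intro n k
    refine integral_mono ((hvint k).indicator (hBmeas n)) (hvint k) ?_
    intro s
    refine Set.indicator_le_self' (fun y _ => by positivity) s
  -- CS bound
  have hcs : ∀ n k, ‖JSM.ck S μ (h n) k‖^2 ≤ m n * I n k := by
    intro n k
    have hcsb := JSM.cs (humem n) (hvmem n k)
    rw [hu2, hv2] at hcsb
    rw [hckuv n k]
    calc ‖∫ s, u n s * v n k s ∂μ‖^2
        ≤ (Real.sqrt (m n) * Real.sqrt (I n k))^2 :=
          pow_le_pow_left₀ (norm_nonneg _) hcsb 2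
      _ = m n * I n k := by
          rw [mul_pow, Real.sq_sqrt (le_of_lt (hmpos n)), Real.sq_sqrt (hI0 n k)]
  set a : ℕ → ℕ → ℝ := fun n k => ‖JSM.ck S μ (h n) k‖^2 / m n with ha
  have ha0 : ∀ n k, 0 ≤ a n k := fun n k => by positivity
  have haI : ∀ n k, a n k ≤ I n k := by
    intro n k
    rw [ha, div_le_iff₀ (hmpos n)]
    calc ‖JSM.ck S μ (h n) k‖^2 ≤ m n * I n k := hcs n k
      _ = I n k * m n := by ring
  have haρ : ∀ n k, a n k ≤ ρ k := fun n k => le_trans (haI n k) (hIle n k)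
  -- pointwise convergence of I to 0
  have hItend : ∀ k, Tendsto (fun n => I n k) atTop (𝓝 0) := by
    intro k
    have hlim : Tendsto (fun n => I n k) atTop
        (𝓝 (∫ s, ({x} : Set ℝ).indicator
          (fun s : ℝ => ‖S.p k (s:ℂ) * JSM.F lam s‖^2) s ∂μ)) := by
      refine tendsto_integral_of_dominated_convergence
        (fun s => ‖S.p k (s:ℂ) * JSM.F lam s‖^2)
        (fun n => ((hvint k).aestronglyMeasurable.indicator (hBmeas n)))
        (hvint k) (fun n => Filter.Eventually.of_forall (fun s => ?_))
        (Filter.Eventually.of_forall (fun s => ?_))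
      · by_cases hs : s ∈ B n
        · rw [Set.indicator_of_mem hs]
          rw [Real.norm_of_nonneg (by positivity)]
        · rw [Set.indicator_of_notMem hs]
          simp only [norm_zero]
          positivity
      · by_cases hsx : s = x
        · subst hsx
          have e : ∀ n, (B n).indicator (fun s : ℝ => ‖S.p k (s:ℂ) * JSM.F lam s‖^2) s
              = ({s} : Set ℝ).indicator (fun s : ℝ => ‖S.p k (s:ℂ) * JSM.F lam s‖^2) s := by
            intro n
            rw [Set.indicator_of_mem (hxB n), Set.indicator_of_mem (Set.mem_singleton s)]
          exact Tendsto.congr (fun n => (e n).symm) tendsto_const_nhds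
        · have hds : 0 < |s - x| := by
            rw [abs_pos, sub_ne_zero]
            exact hsx
          obtain ⟨N, hN⟩ := exists_nat_one_div_lt hds
          have e : ∀ n ≥ N, (B n).indicator
              (fun s : ℝ => ‖S.p k (s:ℂ) * JSM.F lam s‖^2) s = 0 := by
            intro n hn
            refine Set.indicator_of_notMem ?_ _
            rw [hB]
            simp only [Metric.mem_ball, Real.dist_eq, not_lt]
            have h1 : ε n ≤ ε N := by
              rw [hε]
              refine one_div_le_one_div_of_le (by positivity) ?_
              have : (N:ℝ) ≤ (n:ℝ) := by exact_mod_cast hn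
              linarith
            calc ε n ≤ ε N := h1
              _ ≤ |s - x| := le_of_lt hN
          have e2 : ({x} : Set ℝ).indicator
              (fun s : ℝ => ‖S.p k (s:ℂ) * JSM.F lam s‖^2) s = 0 :=
            Set.indicator_of_notMem (fun hmem => hsx (Set.mem_singleton_iff.1 hmem)) _
          rw [e2]
          refine Tendsto.congr' ?_ tendsto_const_nhds
          refine Filter.eventually_atTop.2 ⟨N, fun n hn => (e n hn).symm⟩
    have hzero : (∫ s, ({x} : Set ℝ).indicator
        (fun s : ℝ => ‖S.p k (s:ℂ) * JSM.F lam s‖^2) s ∂μ) = 0 := by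
      rw [integral_indicator (measurableSet_singleton x),
        show (μ.restrict {x}) = (μ {x}) • Measure.dirac x from Measure.restrict_singleton μ x,
        h0]
      simp
    rw [hzero] at hlim
    exact hlim
  have hatend : ∀ k, Tendsto (fun n => a n k) atTop (𝓝 0) :=
    fun k => squeeze_zero (fun n => ha0 n k) (fun n => haI n k) (hItend k)
  -- Parseval for h n
  have hpars : ∀ n, HasSum (fun k => a n k) ((∫ s, ‖h n s‖^2 ∂μ) / m n) :=
    fun n => (JSM.parseval hμ (hmem n)).div_const (m n)
  -- lower bound for the tsum
  set c₀ : ℝ := ((‖(x:ℂ) - lam‖ + 1)⁻¹)^2 with hc₀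
  have habs : ‖(x:ℂ) - lam‖ + 1 > 0 := by positivity
  have hc₀pos : 0 < c₀ := by positivity
  have hlow : ∀ n, c₀ ≤ ∑' k, a n k := by
    intro n
    rw [(hpars n).tsum_eq, le_div_iff₀ (hmpos n)]
    have hIneq : ∫ s, (B n).indicator (fun _ => c₀) s ∂μ ≤ ∫ s, ‖h n s‖^2 ∂μ := by
      refine integral_mono_ae ((integrable_const c₀).indicator (hBmeas n))
        (JSM.sq_int (hmem n)) ?_
      refine hdae.mono (fun s hs => ?_)
      show (B n).indicator (fun _ => c₀) s ≤ ‖h n s‖^2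
      by_cases hsB : s ∈ B n
      · rw [Set.indicator_of_mem hsB]
        have e : h n s = JSM.F lam s := Set.indicator_of_mem hsB _
        rw [e]
        have h1 : ‖(s:ℂ) - lam‖ ≤ ‖(x:ℂ) - lam‖ + 1 := by
          have h2 : ((s:ℂ) - lam) = ((s:ℂ) - (x:ℂ)) + ((x:ℂ) - lam) := by ring
          rw [h2]
          refine le_trans (norm_add_le _ _) ?_
          have h3 : ‖(s:ℂ) - (x:ℂ)‖ = |s - x| := by
            rw [show ((s:ℂ) - (x:ℂ)) = ((s - x : ℝ) : ℂ) by push_cast; ring,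
              Complex.norm_real, Real.norm_eq_abs]
          rw [h3]
          have h4 : |s - x| < ε n := by
            rw [← Real.dist_eq]
            exact hsB
          have h5 := hε1 n
          linarith
        have h6 : 0 < ‖(s:ℂ) - lam‖ := lt_of_lt_of_le hd0 hs
        have h7 : ‖JSM.F lam s‖ = (‖(s:ℂ) - lam‖)⁻¹ := by
          rw [show JSM.F lam s = ((s:ℂ) - lam)⁻¹ from rfl, norm_inv]
        rw [hc₀, h7]
        have h8 : (‖(x:ℂ) - lam‖ + 1)⁻¹ ≤ (‖(s:ℂ) - lam‖)⁻¹ :=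
          inv_anti₀ h6 h1
        exact pow_le_pow_left₀ (by positivity) h8 2
      · rw [Set.indicator_of_notMem hsB]
        positivity
    rw [integral_indicator_const _ (hBmeas n)] at hIneq
    calc c₀ * m n = (μ (B n)).toReal • c₀ := by rw [smul_eq_mul, hm]; ring
      _ ≤ ∫ s, ‖h n s‖^2 ∂μ := hIneq
  -- dominated convergence for the series
  have hfinal : Tendsto (fun n => ∑' k, a n k) atTop (𝓝 (∑' k : ℕ, (0:ℝ))) := by
    refine tendsto_tsum_of_dominated_convergence hρs hatend ?_
    refine Filter.Eventually.of_forall (fun n k => ?_)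
    rw [Real.norm_of_nonneg (ha0 n k)]
    exact haρ n k
  rw [tsum_zero] at hfinal
  have := ge_of_tendsto' hfinal hlow
  linarith

end Meas4
section Final

open ComplexConjugate Finset Filter MeasureTheory

theorem stmt8' (S : JacobiSetup) (μ : Measure ℝ) (hμ : IsNExtremal S μ)
    (lam : ℂ) (hlam : ∀ x ∈ measSupport μ, (x : ℂ) ≠ lam) :
    (∀ x ∈ measSupport μ, nevD S lam (x : ℂ) ≠ 0 ∧
      ∫ s : ℝ, ((s : ℂ) - lam)⁻¹ ∂μ = -(nevC S lam (x : ℂ) / nevD S lam (x : ℂ))) ∧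
    ∀ x ∈ measSupport μ, ∀ y ∈ measSupport μ,
      nevC S lam (x : ℂ) / nevD S lam (x : ℂ) = nevC S lam (y : ℂ) / nevD S lam (y : ℂ) := by
  classical
  have hsol := hμ.1
  haveI : IsProbabilityMeasure μ := hsol.1
  obtain ⟨d, hd0, hdsup⟩ := exists_dist_bound μ lam hlam
  have hdae : ∀ᵐ (s : ℝ) ∂μ, d ≤ ‖(s:ℂ) - lam‖ :=
    (ae_mem_measSupport μ).mono fun s hs => hdsup s hs
  have hwF : (∫ s : ℝ, ((s : ℂ) - lam)⁻¹ ∂μ) = ∫ s, JSM.F lam s ∂μ := rfl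
  set w : ℂ := ∫ s, JSM.F lam s ∂μ with hw
  have main : ∀ x ∈ measSupport μ, nevD S lam (x : ℂ) ≠ 0 ∧
      w = -(nevC S lam (x : ℂ) / nevD S lam (x : ℂ)) := by
    intro x hx
    have hxlam : (x : ℂ) ≠ lam := hlam x hx
    have hat : μ {x} ≠ 0 := JSM.atom hμ hd0 hdae hx
    set mx : ℝ := (μ {x}).toReal with hmx
    have hmxpos : 0 < mx := ENNReal.toReal_pos hat (measure_ne_top μ _)
    set hI : ℝ → ℂ := ({x} : Set ℝ).indicator (fun _ => (1:ℂ)) with hhI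
    have hImem : MemLp hI 2 μ := by
      refine MemLp.of_bound ((aestronglyMeasurable_const).indicator
        (measurableSet_singleton x)) 1 ?_
      refine Filter.Eventually.of_forall (fun s => ?_)
      exact le_trans (norm_indicator_le_norm_self _ _) (by simp)
    have hI2 : ∫ s, ‖hI s‖^2 ∂μ = mx := by
      have e : ∀ s : ℝ, ‖hI s‖^2 = ({x} : Set ℝ).indicator (fun _ => (1:ℝ)) s := by
        intro s
        by_cases hs : s ∈ ({x} : Set ℝ)
        · rw [show hI s = 1 from Set.indicator_of_mem hs _, Set.indicator_of_mem hs]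
          simp
        · rw [show hI s = 0 from Set.indicator_of_notMem hs _, Set.indicator_of_notMem hs]
          simp
      rw [integral_congr_ae (Filter.Eventually.of_forall e),
        integral_indicator_const _ (measurableSet_singleton x)]
      simp [hmx, Measure.real]
    -- pairing with the atom
    have hsing : ∀ f : ℝ → ℂ, ∫ s, f s * hI s ∂μ = mx * f x := by
      intro f
      have e : ∀ s : ℝ, f s * hI s = ({x} : Set ℝ).indicator f s := by
        intro s
        by_cases hs : s ∈ ({x} : Set ℝ)
        · rw [show hI s = 1 from Set.indicator_of_mem hs _, Set.indicator_of_mem hs, mul_one]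
        · rw [show hI s = 0 from Set.indicator_of_notMem hs _,
            Set.indicator_of_notMem hs, mul_zero]
      rw [integral_congr_ae (Filter.Eventually.of_forall e),
        integral_indicator (measurableSet_singleton x),
        show (μ.restrict {x}) = (μ {x}) • Measure.dirac x from Measure.restrict_singleton μ x,
        integral_smul_measure, integral_dirac, ← hmx, Complex.real_smul]
    -- coefficients of F
    set c : ℕ → ℂ := JSM.ck S μ (JSM.F lam) with hc
    have hcpsi : ∀ k, c k = S.q k lam + w * S.p k lam := by
      intro k
      rw [hc, JSM.ck_F, JSM.psi_eq hsol hd0 hdae k, hw]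
    -- partial sums pairing
    have hTN : ∀ N : ℕ, ∫ s, (∑ k ∈ range (N+1), c k * S.p k (s:ℂ)) * hI s ∂μ
        = (mx : ℂ) * ∑ k ∈ range (N+1), c k * S.p k (x:ℂ) := by
      intro N
      have e : ∀ s : ℝ, (∑ k ∈ range (N+1), c k * S.p k (s:ℂ)) * hI s
          = ∑ k ∈ range (N+1), c k * (S.p k (s:ℂ) * hI s) := by
        intro s
        rw [Finset.sum_mul]
        exact Finset.sum_congr rfl fun k _ => by ring
      have hint : ∀ k, Integrable (fun s : ℝ => S.p k (s:ℂ) * hI s) μ :=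
        fun k => JSM.mul_int (JSM.p_mem2 hsol k) hImem
      rw [integral_congr_ae (Filter.Eventually.of_forall e),
        integral_finset_sum _ (fun k _ => (hint k).const_mul _)]
      rw [Finset.mul_sum]
      refine Finset.sum_congr rfl fun k _ => ?_
      rw [integral_const_mul, hsing (fun s : ℝ => S.p k (s:ℂ))]
      ring
    -- remainder estimate
    have hFI : ∫ s, JSM.F lam s * hI s ∂μ = (mx : ℂ) * ((x:ℂ) - lam)⁻¹ :=
      hsing (JSM.F lam)
    have hRN : Tendsto (fun N => ∫ s, (JSM.F lam s
        - ∑ k ∈ range (N+1), c k * S.p k (s:ℂ)) * hI s ∂μ) atTop (𝓝 0) := by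
      have hEN := JSM.EN_tendsto hμ (JSM.F_mem2 hd0 hdae)
      have hb : ∀ N : ℕ, ‖∫ s, (JSM.F lam s
          - ∑ k ∈ range (N+1), c k * S.p k (s:ℂ)) * hI s ∂μ‖
          ≤ Real.sqrt (∫ s, ‖JSM.F lam s - ∑ k ∈ range (N+1), c k * S.p k (s:ℂ)‖^2 ∂μ)
            * Real.sqrt mx := by
        intro N
        have hcs := JSM.cs ((JSM.F_mem2 hd0 hdae).sub (JSM.T_mem2 hsol c N)) hImem
        rw [hI2] at hcs
        exact hcs
      refine squeeze_zero_norm hb ?_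
      have h1 : Tendsto (fun N => Real.sqrt (∫ s, ‖JSM.F lam s
          - ∑ k ∈ range (N+1), c k * S.p k (s:ℂ)‖^2 ∂μ)) atTop (𝓝 0) := by
        have := (Real.continuous_sqrt.tendsto 0).comp hEN
        rwa [Real.sqrt_zero] at this
      have := h1.mul_const (Real.sqrt mx)
      simpa using this
    -- split the integral
    have hsplit : ∀ N : ℕ, ∫ s, (JSM.F lam s
        - ∑ k ∈ range (N+1), c k * S.p k (s:ℂ)) * hI s ∂μ
        = (∫ s, JSM.F lam s * hI s ∂μ)
          - ∫ s, (∑ k ∈ range (N+1), c k * S.p k (s:ℂ)) * hI s ∂μ := by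
      intro N
      have e : ∀ s : ℝ, (JSM.F lam s - ∑ k ∈ range (N+1), c k * S.p k (s:ℂ)) * hI s
          = JSM.F lam s * hI s - (∑ k ∈ range (N+1), c k * S.p k (s:ℂ)) * hI s :=
        fun s => by ring
      have i1 : Integrable (fun s : ℝ => JSM.F lam s * hI s) μ :=
        JSM.mul_int (JSM.F_mem2 hd0 hdae) hImem
      have i2 : Integrable (fun s : ℝ =>
          (∑ k ∈ range (N+1), c k * S.p k (s:ℂ)) * hI s) μ :=
        JSM.mul_int (JSM.T_mem2 hsol c N) hImem
      rw [integral_congr_ae (Filter.Eventually.of_forall e), integral_sub i1 i2]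
    -- conclude: partial sums converge to mx * F x
    have hTlim : Tendsto (fun N => (mx:ℂ) * ∑ k ∈ range (N+1), c k * S.p k (x:ℂ))
        atTop (𝓝 ((mx:ℂ) * ((x:ℂ) - lam)⁻¹)) := by
      have h2 : Tendsto (fun N => (∫ s, JSM.F lam s * hI s ∂μ)
          - ∫ s, (JSM.F lam s - ∑ k ∈ range (N+1), c k * S.p k (s:ℂ)) * hI s ∂μ)
          atTop (𝓝 ((mx:ℂ) * ((x:ℂ) - lam)⁻¹ - 0)) := tendsto_const_nhds.sub hRN |>.congr
          (fun N => by rw [hFI]) |>.congr (fun N => rfl)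
      rw [sub_zero] at h2
      refine h2.congr (fun N => ?_)
      rw [hsplit N, hTN N]
      ring
    have hplim : Tendsto (fun N => ∑ k ∈ range (N+1), c k * S.p k (x:ℂ))
        atTop (𝓝 (((x:ℂ) - lam)⁻¹)) := by
      have hmxC : ((mx:ℂ)) ≠ 0 := by
        simp only [ne_eq, Complex.ofReal_eq_zero]
        exact ne_of_gt hmxpos
      have := hTlim.const_mul ((mx:ℂ))⁻¹
      simp only [← mul_assoc, inv_mul_cancel₀ hmxC, one_mul] at this
      exact this
    -- identify the limit with the Nevanlinna sums
    have hsumqp : Tendsto (fun N => ∑ k ∈ range (N+1),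
        (S.q k lam * S.p k (x:ℂ) + w * (S.p k lam * S.p k (x:ℂ))))
        atTop (𝓝 ((∑' k, S.q k lam * S.p k (x:ℂ)) + w * ∑' k, S.p k lam * S.p k (x:ℂ))) := by
      have h1 := JS.tendsto_partial (JS.summable_qp S lam (x:ℂ))
      have h2 := (JS.tendsto_partial (JS.summable_pp S lam (x:ℂ))).const_mul w
      have h3 := h1.add h2
      refine h3.congr (fun N => ?_)
      rw [Finset.mul_sum, ← Finset.sum_add_distrib]
    have heq : (∑' k, S.q k lam * S.p k (x:ℂ)) + w * (∑' k, S.p k lam * S.p k (x:ℂ))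
        = ((x:ℂ) - lam)⁻¹ := by
      refine tendsto_nhds_unique ?_ hplim
      refine hsumqp.congr (fun N => ?_)
      refine Finset.sum_congr rfl fun k _ => ?_
      rw [hcpsi k]
      ring
    -- the key linear relation
    have hCwD : nevC S lam (x:ℂ) + w * nevD S lam (x:ℂ) = 0 := by
      rw [nevC, nevD]
      have hfe : (lam - (x:ℂ)) * (((x:ℂ) - lam)⁻¹) = -1 := by
        rw [show (lam - (x:ℂ)) = -(((x:ℂ)) - lam) by ring]
        rw [neg_mul, mul_inv_cancel₀ (sub_ne_zero.2 hxlam)]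
      calc 1 + (lam - (x:ℂ)) * (∑' k, S.q k lam * S.p k (x:ℂ))
            + w * ((lam - (x:ℂ)) * ∑' k, S.p k lam * S.p k (x:ℂ))
          = 1 + (lam - (x:ℂ)) * ((∑' k, S.q k lam * S.p k (x:ℂ))
              + w * (∑' k, S.p k lam * S.p k (x:ℂ))) := by ring
        _ = 1 + (lam - (x:ℂ)) * (((x:ℂ) - lam)⁻¹) := by rw [heq]
        _ = 0 := by rw [hfe]; ring
    have hD : nevD S lam (x:ℂ) ≠ 0 := by
      intro hD0
      have hC0 : nevC S lam (x:ℂ) = 0 := by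
        have := hCwD
        rw [hD0, mul_zero, add_zero] at this
        exact this
      have hdet := JS.nev_det S lam (x:ℂ)
      rw [hD0, hC0, mul_zero, mul_zero, sub_zero] at hdet
      exact zero_ne_one hdet
    refine ⟨hD, ?_⟩
    rw [eq_comm, neg_eq_iff_eq_neg, div_eq_iff hD]
    linear_combination hCwD
  refine ⟨fun x hx => ⟨(main x hx).1, by rw [hwF]; exact (main x hx).2⟩, ?_⟩
  intro x hx y hy
  have h1 := (main x hx).2
  have h2 := (main y hy).2
  have := h1.symm.trans h2
  linear_combination -this

end Final
/-- For an N-extremal solution `μ` and `λ ∉ supp(μ)`: for every `x ∈ supp(μ)` one has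
`D(λ,x) ≠ 0` and `∫ 1/(s−λ) dμ(s) = −C(λ,x)/D(λ,x)`; in particular the ratio
`C(λ,x)/D(λ,x)` does not depend on `x ∈ supp(μ)`. -/
theorem stmt8 (S : JacobiSetup) (μ : Measure ℝ) (hμ : IsNExtremal S μ)
    (lam : ℂ) (hlam : ∀ x ∈ measSupport μ, (x : ℂ) ≠ lam) :
    (∀ x ∈ measSupport μ, nevD S lam (x : ℂ) ≠ 0 ∧
      ∫ s : ℝ, ((s : ℂ) - lam)⁻¹ ∂μ = -(nevC S lam (x : ℂ) / nevD S lam (x : ℂ))) ∧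
    ∀ x ∈ measSupport μ, ∀ y ∈ measSupport μ,
      nevC S lam (x : ℂ) / nevD S lam (x : ℂ) = nevC S lam (y : ℂ) / nevD S lam (y : ℂ) := by
  exact stmt8' S μ hμ lam hlam
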